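/- Fix m, n ≥ 1 and i ∈ [m−1]. If two strings u, u′ ∈ [m]^n are Knuth equivalent, then either E_i(u) and E_i(u′) are both 0 or they are Knuth equivalent; likewise, either F_i(u) and F_i(u′) are both 0 or they are Knuth equivalent. -/

import Mathlib

/-! ### Crystal operators on words -/

/-- The number of `i`'s minus the number of `(i+1)`'s among the first `k` letters of `w`
(viewing each `i` as a closing parenthesis and each `i+1` as an opening parenthesis). -/
def prefD (i : ℕ) (w : List ℕ) (k : ℕ) : ℤ :=
  ((w.take k).count i : ℤ) - ((w.take k).count (i + 1) : ℤ)

/-- The number of `(i+1)`'s minus the number of `i`'s in the suffix of `w` starting at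
position `k`. -/
def suffD (i : ℕ) (w : List ℕ) (k : ℕ) : ℤ :=
  ((w.drop k).count (i + 1) : ℤ) - ((w.drop k).count i : ℤ)

/-- Position `p` of `w` holds a letter `i` which, viewed as a closing parenthesis
(each `i+1` being an opening parenthesis, all other letters ignored), is unmatched in the
usual parenthesis matching. -/
def IsUnmatchedClose (i : ℕ) (w : List ℕ) (p : ℕ) : Prop :=
  w[p]? = some i ∧ ∀ q ≤ p, prefD i w q < prefD i w (p + 1)

/-- Position `p` of `w` holds a letter `i+1` which, viewed as an opening parenthesis
(each `i` being a closing parenthesis, all other letters ignored), is unmatched in the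
usual parenthesis matching. -/
def IsUnmatchedOpen (i : ℕ) (w : List ℕ) (p : ℕ) : Prop :=
  w[p]? = some (i + 1) ∧ ∀ q ≤ w.length, p < q → suffD i w q < suffD i w p

instance (i : ℕ) (w : List ℕ) (p : ℕ) : Decidable (IsUnmatchedClose i w p) := by
  unfold IsUnmatchedClose; infer_instance

instance (i : ℕ) (w : List ℕ) (p : ℕ) : Decidable (IsUnmatchedOpen i w p) := by
  unfold IsUnmatchedOpen; infer_instance

/-- The (increasing) list of positions of unmatched `i`'s (closing parentheses) of `w`. -/
def unmatchedCloses (i : ℕ) (w : List ℕ) : List ℕ :=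
  (List.range w.length).filter fun p => decide (IsUnmatchedClose i w p)

/-- The (increasing) list of positions of unmatched `(i+1)`'s (opening parentheses) of `w`. -/
def unmatchedOpens (i : ℕ) (w : List ℕ) : List ℕ :=
  (List.range w.length).filter fun p => decide (IsUnmatchedOpen i w p)

/-- The crystal operator `F_i` on words: replace the rightmost unmatched `i` by `i+1`;
`none` (i.e. `0`) if every `i` is matched. -/
def Fop (i : ℕ) (w : List ℕ) : Option (List ℕ) :=
  match (unmatchedCloses i w).getLast? with
  | none => none
  | some p => some (w.set p (i + 1))

/-- The crystal operator `E_i` on words: replace the leftmost unmatched `i+1` by `i`;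
`none` (i.e. `0`) if every `i+1` is matched. -/
def Eop (i : ℕ) (w : List ℕ) : Option (List ℕ) :=
  match (unmatchedOpens i w).head? with
  | none => none
  | some p => some (w.set p i)

/-- `s` is a string over the alphabet `{1, …, m}`. -/
def IsWordOver (m : ℕ) (s : List ℕ) : Prop := ∀ x ∈ s, 1 ≤ x ∧ x ≤ m

/-- An elementary Knuth transformation on three consecutive letters:
`xzy ↔ zxy` for `x ≤ y < z`, and `yxz ↔ yzx` for `x < y ≤ z`. -/
inductive KnuthStep : List ℕ → List ℕ → Prop
  | xzy_zxy (a b : List ℕ) (x y z : ℕ) (h1 : x ≤ y) (h2 : y < z) :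
      KnuthStep (a ++ x :: z :: y :: b) (a ++ z :: x :: y :: b)
  | yxz_yzx (a b : List ℕ) (x y z : ℕ) (h1 : x < y) (h2 : y ≤ z) :
      KnuthStep (a ++ y :: x :: z :: b) (a ++ y :: z :: x :: b)

/-- Knuth equivalence: the equivalence relation generated by the elementary Knuth
transformations. -/
def KnuthEquiv : List ℕ → List ℕ → Prop := Relation.EqvGen KnuthStep

-- ###################### new material ######################

/-- `+1` for an opening letter `i+1`, `-1` for a closing letter `i`, `0` otherwise. -/
def dlt (i c : ℕ) : ℤ := (if c = i + 1 then 1 else 0) - (if c = i then 1 else 0)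

lemma dlt_open (i : ℕ) : dlt i (i+1) = 1 := by simp [dlt]
lemma dlt_close (i : ℕ) : dlt i i = -1 := by simp [dlt]
lemma dlt_other {i c : ℕ} (h1 : c ≠ i) (h2 : c ≠ i + 1) : dlt i c = 0 := by simp [dlt, h1, h2]

lemma suffD_of_length_le {i : ℕ} {w : List ℕ} {k : ℕ} (h : w.length ≤ k) : suffD i w k = 0 := by
  simp [suffD, List.drop_eq_nil_of_le h]

lemma suffD_length (i : ℕ) (w : List ℕ) : suffD i w w.length = 0 :=
  suffD_of_length_le le_rfl

lemma count_cons' (a b : ℕ) (l : List ℕ) :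
    List.count a (b :: l) = List.count a l + if b = a then 1 else 0 := by
  simp [List.count_cons]

lemma suffD_succ {i : ℕ} {w : List ℕ} {k : ℕ} (h : k < w.length) :
    suffD i w k = suffD i w (k+1) + dlt i (w[k]'h) := by
  unfold suffD
  rw [List.drop_eq_getElem_cons h, count_cons', count_cons', dlt]
  push_cast
  split_ifs <;> omega

/-- spec of the position where `Eop` acts -/
def SpecE (i : ℕ) (w : List ℕ) (p : ℕ) : Prop :=
  p < w.length ∧ 0 < suffD i w p ∧ (∀ k ≤ w.length, suffD i w k ≤ suffD i w p) ∧
    (∀ k ≤ w.length, p < k → suffD i w k < suffD i w p)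

lemma SpecE.getElem {i : ℕ} {w : List ℕ} {p : ℕ} (h : SpecE i w p) : w[p]'h.1 = i + 1 := by
  obtain ⟨hp, hpos, hmax, hstrict⟩ := h
  have h1 : suffD i w (p+1) < suffD i w p := hstrict (p+1) (by omega) (by omega)
  have h2 := suffD_succ (i := i) hp
  by_contra hne
  rcases eq_or_ne (w[p]'hp) i with he | he
  · rw [he, dlt_close] at h2; omega
  · rw [dlt_other he hne] at h2; omega

lemma specE_unique {i : ℕ} {w : List ℕ} {p p' : ℕ} (h : SpecE i w p) (h' : SpecE i w p') :
    p = p' := by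
  obtain ⟨hp, _, hmax, hstrict⟩ := h
  obtain ⟨hp', _, hmax', hstrict'⟩ := h'
  by_contra hne
  rcases Nat.lt_or_ge p p' with hlt | hge
  · have := hstrict p' (by omega) hlt
    have := hmax p (by omega)
    have := hmax' p (by omega)
    omega
  · have hlt : p' < p := by omega
    have := hstrict' p (by omega) hlt
    have := hmax p' (by omega)
    have := hmax' p' (by omega)
    omega

lemma exists_specE {i : ℕ} {w : List ℕ} (h : ∃ k, k ≤ w.length ∧ 0 < suffD i w k) :
    ∃ p, SpecE i w p := by
  classical
  obtain ⟨k₀, hk₀, hpos⟩ := h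
  obtain ⟨j, hj, hmax⟩ := Finset.exists_max_image (Finset.range (w.length+1)) (suffD i w)
    ⟨0, by simp⟩
  have hjr : j ≤ w.length := by have := Finset.mem_range.mp hj; omega
  have hjpos : 0 < suffD i w j := lt_of_lt_of_le hpos (hmax k₀ (Finset.mem_range.mpr (by omega)))
  set T := (Finset.range (w.length+1)).filter (fun k => suffD i w k = suffD i w j) with hT
  have hTne : T.Nonempty := ⟨j, by simp [hT, Finset.mem_filter, Finset.mem_range]; omega⟩
  set p := T.max' hTne with hpdef
  have hpT : p ∈ T := T.max'_mem hTne
  obtain ⟨hpr, hpv⟩ := Finset.mem_filter.mp hpT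
  have hple : p ≤ w.length := by have := Finset.mem_range.mp hpr; omega
  have hppos : 0 < suffD i w p := by rw [hpv]; exact hjpos
  have hplen : p < w.length := by
    rcases Nat.lt_or_ge p w.length with h | h
    · exact h
    · exfalso; have : p = w.length := by omega
      rw [this, suffD_length] at hppos; omega
  refine ⟨p, hplen, hppos, ?_, ?_⟩
  · intro k hk
    rw [hpv]; exact hmax k (Finset.mem_range.mpr (by omega))
  · intro k hk hpk
    have hle : suffD i w k ≤ suffD i w j := hmax k (Finset.mem_range.mpr (by omega))
    rcases lt_or_eq_of_le hle with h | h
    · omega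
    · exfalso
      have : k ∈ T := Finset.mem_filter.mpr ⟨Finset.mem_range.mpr (by omega), h⟩
      have := Finset.le_max' T k this
      omega

lemma specE_isUnmatchedOpen {i : ℕ} {w : List ℕ} {p : ℕ} (h : SpecE i w p) :
    IsUnmatchedOpen i w p := by
  refine ⟨?_, fun q hq hpq => h.2.2.2 q hq hpq⟩
  rw [List.getElem?_eq_getElem h.1, h.getElem]

section
variable {q : ℕ → Prop} [DecidablePred q]

lemma head?_filter_range {n p : ℕ} :
    ((List.range n).filter (fun m => decide (q m))).head? = some p ↔
      p < n ∧ q p ∧ ∀ m < p, ¬ q m := by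
  induction n generalizing p with
  | zero => simp
  | succ n ih =>
    rw [List.range_succ, List.filter_append, List.head?_append, List.filter_singleton]
    rcases h : ((List.range n).filter (fun m => decide (q m))).head? with _ | p₀
    · have hall : ∀ m < n, ¬ q m := by
        rw [List.head?_eq_none_iff, List.filter_eq_nil_iff] at h
        simp only [List.mem_range, decide_eq_true_eq] at h
        exact h
      by_cases hqn : q n
      · rw [show (bif decide (q n) then [n] else ([] : List ℕ)) = [n] by simp [hqn]]
        simp only [Option.or, List.head?]
        constructor
        · rintro h'
          have hpn : p = n := by simpa using h'.symm
          subst hpn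
          exact ⟨by omega, hqn, hall⟩
        · rintro ⟨hpn, hqp, hmin⟩
          have : p = n := by
            by_contra hne
            exact hall p (by omega) hqp
          simp [this]
      · rw [show (bif decide (q n) then [n] else ([] : List ℕ)) = [] by simp [hqn]]
        simp only [Option.or, List.head?]
        constructor
        · rintro h'; simp at h'
        · rintro ⟨hpn, hqp, hmin⟩
          exfalso
          rcases Nat.lt_or_ge p n with h' | h'
          · exact hall p h' hqp
          · have : p = n := by omega
            exact hqn (this ▸ hqp)
    · have hp₀ := ih.mp h
      simp only [Option.or]
      constructor
      · rintro h'
        have : p = p₀ := by simpa using h'.symm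
        subst this
        exact ⟨by omega, hp₀.2.1, hp₀.2.2⟩
      · rintro ⟨hpn, hqp, hmin⟩
        have : p = p₀ := by
          rcases Nat.lt_trichotomy p p₀ with h' | h' | h'
          · exact absurd hqp (hp₀.2.2 p h')
          · exact h'
          · exact absurd hp₀.2.1 (hmin p₀ h')
        simp [this]

lemma getLast?_filter_range {n p : ℕ} :
    ((List.range n).filter (fun m => decide (q m))).getLast? = some p ↔
      p < n ∧ q p ∧ ∀ m, p < m → m < n → ¬ q m := by
  induction n generalizing p with
  | zero => simp
  | succ n ih =>
    rw [List.range_succ, List.filter_append, List.getLast?_append, List.filter_singleton]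
    by_cases hqn : q n
    · rw [show (bif decide (q n) then [n] else ([] : List ℕ)) = [n] by simp [hqn]]
      simp only [Option.or, List.getLast?_singleton]
      constructor
      · rintro h'
        have hpn : p = n := by simpa using h'.symm
        subst hpn
        exact ⟨by omega, hqn, fun m h1 h2 => by omega⟩
      · rintro ⟨hpn, hqp, hmax⟩
        have : p = n := by
          by_contra hne
          exact hmax n (by omega) (by omega) hqn
        simp [this]
    · rw [show (bif decide (q n) then [n] else ([] : List ℕ)) = [] by simp [hqn]]
      simp only [Option.or, List.getLast?_nil]
      rw [ih]
      constructor
      · rintro ⟨hpn, hqp, hmax⟩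
        refine ⟨by omega, hqp, fun m h1 h2 => ?_⟩
        rcases Nat.lt_or_ge m n with h' | h'
        · exact hmax m h1 h'
        · have : m = n := by omega
          exact this ▸ hqn
      · rintro ⟨hpn, hqp, hmax⟩
        have hpn' : p < n := by
          rcases Nat.lt_or_ge p n with h' | h'
          · exact h'
          · exfalso; have : p = n := by omega
            exact hqn (this ▸ hqp)
        exact ⟨hpn', hqp, fun m h1 h2 => hmax m h1 (by omega)⟩

lemma head?_filter_range_none {n : ℕ} :
    ((List.range n).filter (fun m => decide (q m))).head? = none ↔ ∀ m < n, ¬ q m := by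
  rw [List.head?_eq_none_iff, List.filter_eq_nil_iff]
  simp only [List.mem_range, decide_eq_true_eq]

lemma getLast?_filter_range_none {n : ℕ} :
    ((List.range n).filter (fun m => decide (q m))).getLast? = none ↔ ∀ m < n, ¬ q m := by
  rw [List.getLast?_eq_none_iff, List.filter_eq_nil_iff]
  simp only [List.mem_range, decide_eq_true_eq]

end


-- ############ characterization of Eop ############

lemma eop_eq_none_iff {i : ℕ} {w : List ℕ} :
    Eop i w = none ↔ ∀ k ≤ w.length, suffD i w k ≤ 0 := by
  have hmatch : Eop i w = none ↔ (unmatchedOpens i w).head? = none := by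
    unfold Eop
    rcases (unmatchedOpens i w).head? with _ | p <;> simp
  rw [hmatch, unmatchedOpens, head?_filter_range_none]
  constructor
  · intro hall k hk
    by_contra hpos
    obtain ⟨p, hp⟩ := exists_specE (i := i) (w := w) ⟨k, hk, by omega⟩
    exact hall p hp.1 (specE_isUnmatchedOpen hp)
  · intro hall m hm hunm
    have h1 := hunm.2 w.length le_rfl hm
    rw [suffD_length] at h1
    have := hall m (by omega)
    omega

lemma eop_eq_some_iff {i : ℕ} {w : List ℕ} {v : List ℕ} :
    Eop i w = some v ↔ ∃ p, SpecE i w p ∧ v = w.set p i := by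
  have hmatch : ∀ p, (unmatchedOpens i w).head? = some p → Eop i w = some (w.set p i) := by
    intro p hp
    unfold Eop
    rw [hp]
  constructor
  · intro hv
    unfold Eop at hv
    rcases hhead : (unmatchedOpens i w).head? with _ | p
    · rw [hhead] at hv; simp at hv
    · rw [hhead] at hv
      simp only [Option.some.injEq] at hv
      rw [unmatchedOpens, head?_filter_range] at hhead
      obtain ⟨hplen, hunm, hmin⟩ := hhead
      have hpos : 0 < suffD i w p := by
        have := hunm.2 w.length le_rfl hplen
        rw [suffD_length] at this; omega
      obtain ⟨p₀, hp₀⟩ := exists_specE ⟨p, by omega, hpos⟩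
      have hunm₀ : IsUnmatchedOpen i w p₀ := specE_isUnmatchedOpen hp₀
      have hle : p ≤ p₀ := by
        by_contra hlt
        exact hmin p₀ (by omega) hunm₀
      have hpp₀ : p = p₀ := by
        rcases eq_or_lt_of_le hle with h | h
        · exact h
        · exfalso
          have hp₀len := hp₀.1
          have h1 := hunm.2 p₀ (by omega) h
          have h2 := hp₀.2.2.1 p (by omega)
          omega
      exact ⟨p, hpp₀ ▸ hp₀, hv.symm⟩
  · rintro ⟨p, hp, rfl⟩
    apply hmatch
    rw [unmatchedOpens, head?_filter_range]
    refine ⟨hp.1, specE_isUnmatchedOpen hp, fun m hm hunm => ?_⟩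
    have hplen := hp.1
    have h1 := hunm.2 p (by omega) hm
    have h2 := hp.2.2.1 m (by omega)
    omega

-- ############ prefD side ############

def dltF (i c : ℕ) : ℤ := (if c = i then 1 else 0) - (if c = i + 1 then 1 else 0)

lemma dltF_close (i : ℕ) : dltF i i = 1 := by simp [dltF]
lemma dltF_open (i : ℕ) : dltF i (i+1) = -1 := by simp [dltF]
lemma dltF_other {i c : ℕ} (h1 : c ≠ i) (h2 : c ≠ i + 1) : dltF i c = 0 := by simp [dltF, h1, h2]

lemma prefD_zero (i : ℕ) (w : List ℕ) : prefD i w 0 = 0 := by simp [prefD]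

lemma prefD_succ {i : ℕ} {w : List ℕ} {k : ℕ} (h : k < w.length) :
    prefD i w (k+1) = prefD i w k + dltF i (w[k]'h) := by
  unfold prefD
  rw [List.take_succ, List.getElem?_eq_getElem h]
  simp only [Option.toList_some, List.count_append, List.count_singleton]
  rw [dltF]
  push_cast
  split_ifs <;> simp_all <;> omega

def SpecF (i : ℕ) (w : List ℕ) (q : ℕ) : Prop :=
  q ≤ w.length ∧ 0 < q ∧ 0 < prefD i w q ∧ (∀ k ≤ w.length, prefD i w k ≤ prefD i w q) ∧
    (∀ k < q, prefD i w k < prefD i w q)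

lemma SpecF.pred_lt {i : ℕ} {w : List ℕ} {q : ℕ} (h : SpecF i w q) : q - 1 < w.length := by
  have := h.1; have := h.2.1; omega

lemma SpecF.getElem {i : ℕ} {w : List ℕ} {q : ℕ} (h : SpecF i w q) : w[q-1]'h.pred_lt = i := by
  obtain ⟨hq, hq0, hpos, hmax, hstrict⟩ := h
  have hlt : q - 1 < w.length := by omega
  have h1 : prefD i w (q-1) < prefD i w q := hstrict (q-1) (by omega)
  have h2 : prefD i w ((q-1)+1) = prefD i w (q-1) + dltF i (w[q-1]'hlt) := prefD_succ hlt
  rw [show (q-1)+1 = q by omega] at h2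
  by_contra hne
  rcases eq_or_ne (w[q-1]'hlt) (i+1) with he | he
  · rw [he, dltF_open] at h2; omega
  · rw [dltF_other hne he] at h2; omega

lemma specF_unique {i : ℕ} {w : List ℕ} {q q' : ℕ} (h : SpecF i w q) (h' : SpecF i w q') :
    q = q' := by
  obtain ⟨hq, _, _, hmax, hstrict⟩ := h
  obtain ⟨hq', _, _, hmax', hstrict'⟩ := h'
  by_contra hne
  rcases Nat.lt_or_ge q q' with hlt | hge
  · have := hstrict' q hlt
    have := hmax' q' (by omega)
    have := hmax q' (by omega)
    omega
  · have hlt : q' < q := by omega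
    have := hstrict q' hlt
    have := hmax q' (by omega)
    have := hmax' q (by omega)
    omega

lemma exists_specF {i : ℕ} {w : List ℕ} (h : ∃ k, k ≤ w.length ∧ 0 < prefD i w k) :
    ∃ q, SpecF i w q := by
  classical
  obtain ⟨k₀, hk₀, hpos⟩ := h
  obtain ⟨j, hj, hmax⟩ := Finset.exists_max_image (Finset.range (w.length+1)) (prefD i w)
    ⟨0, by simp⟩
  have hjr : j ≤ w.length := by have := Finset.mem_range.mp hj; omega
  have hjpos : 0 < prefD i w j := lt_of_lt_of_le hpos (hmax k₀ (Finset.mem_range.mpr (by omega)))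
  set T := (Finset.range (w.length+1)).filter (fun k => prefD i w k = prefD i w j) with hT
  have hTne : T.Nonempty := ⟨j, by simp [hT, Finset.mem_filter, Finset.mem_range]; omega⟩
  set q := T.min' hTne with hqdef
  have hqT : q ∈ T := T.min'_mem hTne
  obtain ⟨hqr, hqv⟩ := Finset.mem_filter.mp hqT
  have hqle : q ≤ w.length := by have := Finset.mem_range.mp hqr; omega
  have hqpos : 0 < prefD i w q := by rw [hqv]; exact hjpos
  have hq0 : 0 < q := by
    rcases Nat.eq_zero_or_pos q with h | h
    · exfalso; rw [h, prefD_zero] at hqpos; omega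
    · exact h
  refine ⟨q, hqle, hq0, hqpos, ?_, ?_⟩
  · intro k hk
    rw [hqv]; exact hmax k (Finset.mem_range.mpr (by omega))
  · intro k hk
    have hle : prefD i w k ≤ prefD i w j := hmax k (Finset.mem_range.mpr (by omega))
    rcases lt_or_eq_of_le hle with h | h
    · omega
    · exfalso
      have : k ∈ T := Finset.mem_filter.mpr ⟨Finset.mem_range.mpr (by omega), h⟩
      have := Finset.min'_le T k this
      omega

lemma specF_isUnmatchedClose {i : ℕ} {w : List ℕ} {q : ℕ} (h : SpecF i w q) :
    IsUnmatchedClose i w (q-1) := by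
  constructor
  · rw [List.getElem?_eq_getElem h.pred_lt, h.getElem]
  · intro k hk
    rw [show (q-1)+1 = q by have := h.2.1; omega]
    exact h.2.2.2.2 k (by have := h.2.1; omega)

lemma fop_eq_none_iff {i : ℕ} {w : List ℕ} :
    Fop i w = none ↔ ∀ k ≤ w.length, prefD i w k ≤ 0 := by
  have hmatch : Fop i w = none ↔ (unmatchedCloses i w).getLast? = none := by
    unfold Fop
    rcases (unmatchedCloses i w).getLast? with _ | p <;> simp
  rw [hmatch, unmatchedCloses, getLast?_filter_range_none]
  constructor
  · intro hall k hk
    by_contra hpos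
    obtain ⟨q, hq⟩ := exists_specF (i := i) (w := w) ⟨k, hk, by omega⟩
    exact hall (q-1) hq.pred_lt (specF_isUnmatchedClose hq)
  · intro hall m hm hunm
    have h1 := hunm.2 0 (by omega)
    rw [prefD_zero] at h1
    have := hall (m+1) (by omega)
    omega

lemma fop_eq_some_iff {i : ℕ} {w : List ℕ} {v : List ℕ} :
    Fop i w = some v ↔ ∃ q, SpecF i w q ∧ v = w.set (q-1) (i+1) := by
  constructor
  · intro hv
    unfold Fop at hv
    rcases hlast : (unmatchedCloses i w).getLast? with _ | p
    · rw [hlast] at hv; simp at hv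
    · rw [hlast] at hv
      simp only [Option.some.injEq] at hv
      rw [unmatchedCloses, getLast?_filter_range] at hlast
      obtain ⟨hplen, hunm, hmaxm⟩ := hlast
      have hpos : 0 < prefD i w (p+1) := by
        have := hunm.2 0 (by omega)
        rw [prefD_zero] at this; omega
      obtain ⟨q₀, hq₀⟩ := exists_specF ⟨p+1, by omega, hpos⟩
      have hunm₀ : IsUnmatchedClose i w (q₀-1) := specF_isUnmatchedClose hq₀
      have hle : q₀ - 1 ≤ p := by
        by_contra hlt
        exact hmaxm (q₀-1) (by omega) hq₀.pred_lt hunm₀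
      have hq0 := hq₀.2.1
      have hqeq : q₀ = p + 1 := by
        rcases Nat.lt_or_ge q₀ (p+1) with h | h
        · exfalso
          have h1 := hunm.2 q₀ (by omega)
          have h2 := hq₀.2.2.2.1 (p+1) (by omega)
          omega
        · omega
      refine ⟨p+1, hqeq ▸ hq₀, ?_⟩
      rw [← hv, Nat.add_sub_cancel]
  · rintro ⟨q, hq, rfl⟩
    have hlast : (unmatchedCloses i w).getLast? = some (q-1) := by
      rw [unmatchedCloses, getLast?_filter_range]
      refine ⟨hq.pred_lt, specF_isUnmatchedClose hq, fun m hm hmlen hunm => ?_⟩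
      have h1 := hunm.2 q (by have := hq.2.1; omega)
      have h2 := hq.2.2.2.1 (m+1) (by omega)
      omega
    unfold Fop
    rw [hlast]


-- ############ window computations ############

lemma suffD_cons_zero (i c : ℕ) (l : List ℕ) :
    suffD i (c :: l) 0 = dlt i c + suffD i l 0 := by
  unfold suffD
  rw [List.drop_zero, List.drop_zero, count_cons', count_cons', dlt]
  push_cast
  split_ifs <;> omega

lemma suffD_cons_succ (i c : ℕ) (l : List ℕ) (j : ℕ) :
    suffD i (c :: l) (j+1) = suffD i l j := by simp [suffD]

lemma suffD_append_add (i : ℕ) (a r : List ℕ) (j : ℕ) :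
    suffD i (a ++ r) (a.length + j) = suffD i r j := by
  unfold suffD; rw [List.drop_length_add_append]

lemma suffD_append_le {i k : ℕ} {a : List ℕ} (r : List ℕ) (h : k ≤ a.length) :
    suffD i (a ++ r) k = suffD i a k + suffD i r 0 := by
  unfold suffD
  rw [List.drop_append_of_le_length h]
  simp only [List.count_append, List.drop_zero]
  push_cast; ring

lemma suffD_win0 (i : ℕ) (a b : List ℕ) (c1 c2 c3 : ℕ) :
    suffD i (a ++ c1::c2::c3::b) a.length = dlt i c1 + dlt i c2 + dlt i c3 + suffD i b 0 := by
  rw [show a.length = a.length + 0 by omega, suffD_append_add, suffD_cons_zero, suffD_cons_zero,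
    suffD_cons_zero]
  ring

lemma suffD_win1 (i : ℕ) (a b : List ℕ) (c1 c2 c3 : ℕ) :
    suffD i (a ++ c1::c2::c3::b) (a.length + 1) = dlt i c2 + dlt i c3 + suffD i b 0 := by
  rw [suffD_append_add, show (1:ℕ) = 0 + 1 by omega, suffD_cons_succ]
  rw [suffD_cons_zero, suffD_cons_zero]
  ring

lemma suffD_win2 (i : ℕ) (a b : List ℕ) (c1 c2 c3 : ℕ) :
    suffD i (a ++ c1::c2::c3::b) (a.length + 2) = dlt i c3 + suffD i b 0 := by
  rw [suffD_append_add, show (2:ℕ) = 1 + 1 by omega, suffD_cons_succ, suffD_cons_succ,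
    suffD_cons_zero]

lemma suffD_win3 (i : ℕ) (a b : List ℕ) (c1 c2 c3 : ℕ) (j : ℕ) :
    suffD i (a ++ c1::c2::c3::b) (a.length + 3 + j) = suffD i b j := by
  have h1 : a ++ c1::c2::c3::b = (a ++ [c1,c2,c3]) ++ b := by simp
  have h2 : a.length + 3 + j = (a ++ [c1,c2,c3]).length + j := by simp
  rw [h1, h2, suffD_append_add]

lemma prefD_append_le {i k : ℕ} {a : List ℕ} (r : List ℕ) (h : k ≤ a.length) :
    prefD i (a ++ r) k = prefD i a k := by
  unfold prefD; rw [List.take_append_of_le_length h]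

lemma prefD_cons_succ (i c : ℕ) (l : List ℕ) (j : ℕ) :
    prefD i (c :: l) (j+1) = dltF i c + prefD i l j := by
  unfold prefD
  rw [List.take_succ_cons, count_cons', count_cons', dltF]
  push_cast
  split_ifs <;> omega

lemma prefD_append_add (i : ℕ) (a r : List ℕ) (j : ℕ) :
    prefD i (a ++ r) (a.length + j) = prefD i a a.length + prefD i r j := by
  unfold prefD
  rw [List.take_length_add_append, List.take_length]
  simp only [List.count_append]
  push_cast; ring

lemma prefD_win1 (i : ℕ) (a b : List ℕ) (c1 c2 c3 : ℕ) :
    prefD i (a ++ c1::c2::c3::b) (a.length + 1) =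
      prefD i a a.length + dltF i c1 := by
  rw [prefD_append_add, show (1:ℕ) = 0 + 1 by omega, prefD_cons_succ, prefD_zero]
  ring

lemma prefD_win2 (i : ℕ) (a b : List ℕ) (c1 c2 c3 : ℕ) :
    prefD i (a ++ c1::c2::c3::b) (a.length + 2) =
      prefD i a a.length + dltF i c1 + dltF i c2 := by
  rw [prefD_append_add, show (2:ℕ) = 1 + 1 by omega, prefD_cons_succ, show (1:ℕ) = 0 + 1 by omega,
    prefD_cons_succ, prefD_zero]
  ring

lemma prefD_win3 (i : ℕ) (a b : List ℕ) (c1 c2 c3 : ℕ) (j : ℕ) :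
    prefD i (a ++ c1::c2::c3::b) (a.length + 3 + j) =
      prefD i a a.length + dltF i c1 + dltF i c2 + dltF i c3 + prefD i b j := by
  rw [show a.length + 3 + j = a.length + (3 + j) by omega, prefD_append_add,
    show 3 + j = (2 + j) + 1 by omega, prefD_cons_succ, show 2 + j = (1 + j) + 1 by omega,
    prefD_cons_succ, show 1 + j = j + 1 by omega, prefD_cons_succ]
  ring

lemma prefD_win0 (i : ℕ) (a b : List ℕ) (c1 c2 c3 : ℕ) :
    prefD i (a ++ c1::c2::c3::b) a.length = prefD i a a.length :=
  prefD_append_le _ le_rfl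

-- ############ set lemmas ############

lemma set_append_left {a r : List ℕ} {p c : ℕ} (h : p < a.length) :
    (a ++ r).set p c = a.set p c ++ r := by
  rw [List.set_append, if_pos h]

lemma set_append_right {a r : List ℕ} {p c : ℕ} (h : a.length ≤ p) :
    (a ++ r).set p c = a ++ r.set (p - a.length) c := by
  rw [List.set_append, if_neg (by omega)]

lemma set_win0 (a b : List ℕ) (c1 c2 c3 c : ℕ) :
    (a ++ c1::c2::c3::b).set a.length c = a ++ c::c2::c3::b := by
  rw [set_append_right le_rfl]; simp

lemma set_win1 (a b : List ℕ) (c1 c2 c3 c : ℕ) :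
    (a ++ c1::c2::c3::b).set (a.length + 1) c = a ++ c1::c::c3::b := by
  rw [set_append_right (by omega)]
  simp [show a.length + 1 - a.length = 1 by omega]

lemma set_win2 (a b : List ℕ) (c1 c2 c3 c : ℕ) :
    (a ++ c1::c2::c3::b).set (a.length + 2) c = a ++ c1::c2::c::b := by
  rw [set_append_right (by omega)]
  simp [show a.length + 2 - a.length = 2 by omega]

lemma set_win3 (a b : List ℕ) (c1 c2 c3 c : ℕ) (j : ℕ) :
    (a ++ c1::c2::c3::b).set (a.length + 3 + j) c = a ++ c1::c2::c3::(b.set j c) := by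
  rw [set_append_right (by omega)]
  simp [show a.length + 3 + j - a.length = 3 + j by omega, show 3 + j = j + 1 + 1 + 1 by omega]

-- getElem lemmas
lemma getElem_win {a b : List ℕ} {c1 c2 c3 : ℕ} {p : ℕ}
    (hp : p < (a ++ c1::c2::c3::b).length) (h : p < a.length) :
    (a ++ c1::c2::c3::b)[p] = a[p]'h := by
  rw [List.getElem_append hp]
  simp [h]

lemma getElem_win0 (a b : List ℕ) (c1 c2 c3 : ℕ) (hp : a.length < (a ++ c1::c2::c3::b).length) :
    (a ++ c1::c2::c3::b)[a.length] = c1 := by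
  rw [List.getElem_append_right le_rfl]
  simp

lemma getElem_win1 (a b : List ℕ) (c1 c2 c3 : ℕ)
    (hp : a.length + 1 < (a ++ c1::c2::c3::b).length) :
    (a ++ c1::c2::c3::b)[a.length + 1] = c2 := by
  rw [List.getElem_append_right (by omega)]
  simp [show a.length + 1 - a.length = 1 by omega]

lemma getElem_win2 (a b : List ℕ) (c1 c2 c3 : ℕ)
    (hp : a.length + 2 < (a ++ c1::c2::c3::b).length) :
    (a ++ c1::c2::c3::b)[a.length + 2] = c3 := by
  rw [List.getElem_append_right (by omega)]
  simp [show a.length + 2 - a.length = 2 by omega]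

-- ############ transfer lemmas for E ############

lemma specE_transfer_noninteract {i : ℕ} {w w' : List ℕ} {ks : ℕ}
    (hlen : w'.length = w.length)
    (hagree : ∀ k, k ≠ ks → suffD i w k = suffD i w' k)
    (hf : ∃ j, j ≤ w.length ∧ ks < j ∧ suffD i w ks ≤ suffD i w j)
    (hg : ∃ j, j ≤ w.length ∧ ks < j ∧ suffD i w' ks ≤ suffD i w' j)
    {p : ℕ} (hp : SpecE i w p) : p ≠ ks ∧ SpecE i w' p := by
  obtain ⟨jf, hjf1, hjf2, hjf3⟩ := hf
  obtain ⟨jg, hjg1, hjg2, hjg3⟩ := hg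
  obtain ⟨hplen, hpos, hmax, hstrict⟩ := hp
  have hpks : p ≠ ks := by
    intro h; subst h
    have := hstrict jf hjf1 hjf2; omega
  have hgjg : suffD i w' jg = suffD i w jg := (hagree jg (by omega)).symm
  refine ⟨hpks, by omega, ?_, ?_, ?_⟩
  · rw [← hagree p hpks]; exact hpos
  · intro k hk
    rw [← hagree p hpks]
    by_cases hks : k = ks
    · subst hks
      have h2 := hmax jg hjg1
      omega
    · rw [← hagree k hks]; exact hmax k (by omega)
  · intro k hk hpk
    rw [← hagree p hpks]
    by_cases hks : k = ks
    · subst hks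
      have h2 := hstrict jg hjg1 (by omega)
      omega
    · rw [← hagree k hks]; exact hstrict k (by omega) hpk

lemma specE_transfer_pair {i : ℕ} {w w' : List ℕ} {ks m : ℕ}
    (hlen : w'.length = w.length)
    (hagree : ∀ k, k ≠ ks → suffD i w k = suffD i w' k)
    (hm : m < ks) (hks : ks ≤ w.length)
    (hmv : suffD i w m = suffD i w ks)
    (hlt : suffD i w' ks < suffD i w ks)
    (hbet : ∀ j, m < j → j < ks → suffD i w j < suffD i w ks)
    {p : ℕ} (hp : SpecE i w p) :
    (p = ks ∧ SpecE i w' m) ∨ (p ≠ ks ∧ SpecE i w' p) := by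
  obtain ⟨hplen, hpos, hmax, hstrict⟩ := hp
  have hgm : suffD i w' m = suffD i w m := (hagree m (by omega)).symm
  by_cases hpks : p = ks
  · subst hpks
    left
    refine ⟨rfl, by omega, by omega, ?_, ?_⟩
    · intro k hk
      by_cases hks : k = p
      · subst hks; omega
      · rw [← hagree k hks, hgm]
        have := hmax k (by omega); omega
    · intro k hk hmk
      by_cases hks : k = p
      · subst hks; omega
      · rw [← hagree k hks, hgm]
        rcases Nat.lt_or_ge k p with h' | h'
        · have := hbet k hmk h'; omega
        · have := hstrict k (by omega) (by omega); omega
  · right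
    refine ⟨hpks, by omega, ?_, ?_, ?_⟩
    · rw [← hagree p hpks]; exact hpos
    · intro k hk
      by_cases hks : k = ks
      · subst hks
        rw [← hagree p hpks]
        have := hmax k (by omega); omega
      · rw [← hagree k hks, ← hagree p hpks]; exact hmax k (by omega)
    · intro k hk hpk
      by_cases hks : k = ks
      · subst hks
        rw [← hagree p hpks]
        have := hmax k (by omega); omega
      · rw [← hagree k hks, ← hagree p hpks]; exact hstrict k (by omega) hpk

lemma none_transfer_E {i : ℕ} {w w' : List ℕ} {ks : ℕ}
    (hlen : w'.length = w.length)
    (hagree : ∀ k, k ≠ ks → suffD i w k = suffD i w' k)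
    (hb : ∃ j, j ≤ w.length ∧ suffD i w' ks ≤ suffD i w j)
    (h : ∀ k ≤ w.length, suffD i w k ≤ 0) : ∀ k ≤ w'.length, suffD i w' k ≤ 0 := by
  obtain ⟨j, hj1, hj2⟩ := hb
  intro k hk
  by_cases hks : k = ks
  · subst hks
    have := h j hj1; omega
  · rw [← hagree k hks]; exact h k (by omega)

-- ############ transfer lemmas for F ############

lemma specF_transfer_noninteract {i : ℕ} {w w' : List ℕ} {ks : ℕ}
    (hlen : w'.length = w.length)
    (hagree : ∀ k, k ≠ ks → prefD i w k = prefD i w' k)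
    (hf : ∃ j, j < ks ∧ prefD i w ks ≤ prefD i w j)
    (hg : ∃ j, j < ks ∧ prefD i w' ks ≤ prefD i w' j)
    {q : ℕ} (hq : SpecF i w q) : q ≠ ks ∧ SpecF i w' q := by
  obtain ⟨jf, hjf1, hjf3⟩ := hf
  obtain ⟨jg, hjg1, hjg3⟩ := hg
  obtain ⟨hqlen, hq0, hpos, hmax, hstrict⟩ := hq
  have hqks : q ≠ ks := by
    intro h; subst h
    have := hstrict jf hjf1; omega
  have hgjg : prefD i w' jg = prefD i w jg := (hagree jg (by omega)).symm
  refine ⟨hqks, by omega, hq0, ?_, ?_, ?_⟩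
  · rw [← hagree q hqks]; exact hpos
  · intro k hk
    rw [← hagree q hqks]
    by_cases hks : k = ks
    · subst hks
      have h2 := hmax jg (by omega)
      omega
    · rw [← hagree k hks]; exact hmax k (by omega)
  · intro k hk
    rw [← hagree q hqks]
    by_cases hks : k = ks
    · subst hks
      have h2 := hstrict jg (by omega)
      omega
    · rw [← hagree k hks]; exact hstrict k hk

lemma specF_transfer_pair {i : ℕ} {w w' : List ℕ} {ks m : ℕ}
    (hlen : w'.length = w.length)
    (hagree : ∀ k, k ≠ ks → prefD i w k = prefD i w' k)
    (hm : ks < m) (hmlen : m ≤ w.length)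
    (hmv : prefD i w m = prefD i w ks)
    (hlt : prefD i w' ks < prefD i w ks)
    (hbet : ∀ j, ks < j → j < m → prefD i w j < prefD i w ks)
    {q : ℕ} (hq : SpecF i w q) :
    (q = ks ∧ SpecF i w' m) ∨ (q ≠ ks ∧ SpecF i w' q) := by
  obtain ⟨hqlen, hq0, hpos, hmax, hstrict⟩ := hq
  have hgm : prefD i w' m = prefD i w m := (hagree m (by omega)).symm
  by_cases hqks : q = ks
  · subst hqks
    left
    refine ⟨rfl, by omega, by omega, by omega, ?_, ?_⟩
    · intro k hk
      by_cases hks : k = q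
      · subst hks; omega
      · rw [← hagree k hks, hgm]
        have := hmax k (by omega); omega
    · intro k hk
      by_cases hks : k = q
      · subst hks; omega
      · rw [← hagree k hks, hgm]
        rcases Nat.lt_or_ge k q with h' | h'
        · have := hstrict k h'; omega
        · have := hbet k (by omega) (by omega); omega
  · right
    refine ⟨hqks, by omega, hq0, ?_, ?_, ?_⟩
    · rw [← hagree q hqks]; exact hpos
    · intro k hk
      by_cases hks : k = ks
      · subst hks
        rw [← hagree q hqks]
        have := hmax k (by omega); omega
      · rw [← hagree k hks, ← hagree q hqks]; exact hmax k (by omega)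
    · intro k hk
      by_cases hks : k = ks
      · subst hks
        rw [← hagree q hqks]
        have := hmax k (by omega); omega
      · rw [← hagree k hks, ← hagree q hqks]; exact hstrict k hk

lemma none_transfer_F {i : ℕ} {w w' : List ℕ} {ks : ℕ}
    (hlen : w'.length = w.length)
    (hagree : ∀ k, k ≠ ks → prefD i w k = prefD i w' k)
    (hb : ∃ j, j ≤ w.length ∧ prefD i w' ks ≤ prefD i w j)
    (h : ∀ k ≤ w.length, prefD i w k ≤ 0) : ∀ k ≤ w'.length, prefD i w' k ≤ 0 := by
  obtain ⟨j, hj1, hj2⟩ := hb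
  intro k hk
  by_cases hks : k = ks
  · subst hks
    have := h j hj1; omega
  · rw [← hagree k hks]; exact h k (by omega)

lemma KnuthStep.equiv {v v' : List ℕ} (h : KnuthStep v v') : KnuthEquiv v v' :=
  Relation.EqvGen.rel _ _ h

lemma KnuthStep.equiv' {v v' : List ℕ} (h : KnuthStep v' v) : KnuthEquiv v v' :=
  Relation.EqvGen.symm _ _ (Relation.EqvGen.rel _ _ h)

lemma knuthEquiv_rel1_outside (a b : List ℕ) (x y z : ℕ) (h1 : x ≤ y) (h2 : y < z)
    (p c : ℕ) (hp : p < a.length ∨ a.length + 3 ≤ p) :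
    KnuthEquiv ((a ++ x::z::y::b).set p c) ((a ++ z::x::y::b).set p c) := by
  rcases hp with hp | hp
  · rw [set_append_left hp, set_append_left hp]
    exact (KnuthStep.xzy_zxy (a.set p c) b x y z h1 h2).equiv
  · obtain ⟨j, rfl⟩ : ∃ j, p = a.length + 3 + j := ⟨p - (a.length + 3), by omega⟩
    rw [set_win3, set_win3]
    exact (KnuthStep.xzy_zxy a (b.set j c) x y z h1 h2).equiv

lemma knuthEquiv_rel2_outside (a b : List ℕ) (x y z : ℕ) (h1 : x < y) (h2 : y ≤ z)
    (p c : ℕ) (hp : p < a.length ∨ a.length + 3 ≤ p) :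
    KnuthEquiv ((a ++ y::x::z::b).set p c) ((a ++ y::z::x::b).set p c) := by
  rcases hp with hp | hp
  · rw [set_append_left hp, set_append_left hp]
    exact (KnuthStep.yxz_yzx (a.set p c) b x y z h1 h2).equiv
  · obtain ⟨j, rfl⟩ : ∃ j, p = a.length + 3 + j := ⟨p - (a.length + 3), by omega⟩
    rw [set_win3, set_win3]
    exact (KnuthStep.yxz_yzx a (b.set j c) x y z h1 h2).equiv

/-- The conclusion shape for the `E` operator. -/
def EGoal (i : ℕ) (w w' : List ℕ) : Prop :=
  (Eop i w = none ∧ Eop i w' = none) ∨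
    ∃ v v', Eop i w = some v ∧ Eop i w' = some v' ∧ KnuthEquiv v v'

/-- The conclusion shape for the `F` operator. -/
def FGoal (i : ℕ) (w w' : List ℕ) : Prop :=
  (Fop i w = none ∧ Fop i w' = none) ∨
    ∃ v v', Fop i w = some v ∧ Fop i w' = some v' ∧ KnuthEquiv v v'

lemma eop_finish_noninteract {i : ℕ} {w w' : List ℕ} {ks : ℕ}
    (hlen : w'.length = w.length)
    (hagree : ∀ k, k ≠ ks → suffD i w k = suffD i w' k)
    (hf : ∃ j, j ≤ w.length ∧ ks < j ∧ suffD i w ks ≤ suffD i w j)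
    (hg : ∃ j, j ≤ w.length ∧ ks < j ∧ suffD i w' ks ≤ suffD i w' j)
    (hke : ∀ p, p ≠ ks → SpecE i w p → SpecE i w' p → KnuthEquiv (w.set p i) (w'.set p i)) :
    EGoal i w w' := by
  rcases hE : Eop i w with _ | v
  · left
    obtain ⟨jg, hjg1, hjg2, hjg3⟩ := hg
    refine ⟨hE, eop_eq_none_iff.mpr (none_transfer_E hlen hagree
      ⟨jg, hjg1, ?_⟩ (eop_eq_none_iff.mp hE))⟩
    rw [hagree jg (by omega)]; exact hjg3
  · right
    obtain ⟨p, hp, rfl⟩ := eop_eq_some_iff.mp hE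
    obtain ⟨hne, hp'⟩ := specE_transfer_noninteract hlen hagree hf hg hp
    exact ⟨w.set p i, w'.set p i, hE, eop_eq_some_iff.mpr ⟨p, hp', rfl⟩, hke p hne hp hp'⟩

lemma eop_finish_pair {i : ℕ} {w w' : List ℕ} {ks m : ℕ}
    (hlen : w'.length = w.length)
    (hagree : ∀ k, k ≠ ks → suffD i w k = suffD i w' k)
    (hm : m < ks) (hks : ks ≤ w.length)
    (hmv : suffD i w m = suffD i w ks)
    (hlt : suffD i w' ks < suffD i w ks)
    (hbet : ∀ j, m < j → j < ks → suffD i w j < suffD i w ks)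
    (hkeq : SpecE i w ks → SpecE i w' m → KnuthEquiv (w.set ks i) (w'.set m i))
    (hke : ∀ p, p ≠ ks → SpecE i w p → SpecE i w' p → KnuthEquiv (w.set p i) (w'.set p i)) :
    EGoal i w w' := by
  rcases hE : Eop i w with _ | v
  · left
    refine ⟨hE, eop_eq_none_iff.mpr (none_transfer_E hlen hagree
      ⟨ks, hks, by omega⟩ (eop_eq_none_iff.mp hE))⟩
  · right
    obtain ⟨p, hp, rfl⟩ := eop_eq_some_iff.mp hE
    rcases specE_transfer_pair hlen hagree hm hks hmv hlt hbet hp with ⟨hpks, hp'⟩ | ⟨hpks, hp'⟩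
    · subst hpks
      exact ⟨w.set p i, w'.set m i, hE, eop_eq_some_iff.mpr ⟨m, hp', rfl⟩, hkeq hp hp'⟩
    · exact ⟨w.set p i, w'.set p i, hE, eop_eq_some_iff.mpr ⟨p, hp', rfl⟩, hke p hpks hp hp'⟩

lemma eop_finish_pair' {i : ℕ} {w w' : List ℕ} {ks m : ℕ}
    (hlen : w'.length = w.length)
    (hagree : ∀ k, k ≠ ks → suffD i w k = suffD i w' k)
    (hm : m < ks) (hks : ks ≤ w.length)
    (hmv : suffD i w' m = suffD i w' ks)
    (hlt : suffD i w ks < suffD i w' ks)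
    (hbet : ∀ j, m < j → j < ks → suffD i w' j < suffD i w' ks)
    (hkeq : SpecE i w m → SpecE i w' ks → KnuthEquiv (w.set m i) (w'.set ks i))
    (hke : ∀ p, p ≠ ks → SpecE i w p → SpecE i w' p → KnuthEquiv (w.set p i) (w'.set p i)) :
    EGoal i w w' := by
  have hagree' : ∀ k, k ≠ ks → suffD i w' k = suffD i w k := fun k hk => (hagree k hk).symm
  have hmm : suffD i w' m = suffD i w m := (hagree m (by omega)).symm
  rcases hE : Eop i w with _ | v
  · left
    refine ⟨hE, eop_eq_none_iff.mpr (none_transfer_E hlen hagree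
      ⟨m, by omega, by omega⟩ (eop_eq_none_iff.mp hE))⟩
  · right
    obtain ⟨p, hp, rfl⟩ := eop_eq_some_iff.mp hE
    have hpks : p ≠ ks := by
      intro h
      have h1 := hp.2.2.1 m (by omega)
      rw [h] at h1
      omega
    have hex : ∃ q, SpecE i w' q := by
      apply exists_specE (i := i) (w := w')
      refine ⟨p, by have := hp.1; omega, ?_⟩
      rw [← hagree p hpks]
      exact hp.2.1
    obtain ⟨q, hq⟩ := hex
    rcases specE_transfer_pair (by omega) hagree' hm (by omega) hmv hlt hbet hq with
      ⟨hqks, hq'⟩ | ⟨hqks, hq'⟩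
    · subst hqks
      have hpm : p = m := specE_unique hp hq'
      subst hpm
      exact ⟨w.set p i, w'.set q i, hE, eop_eq_some_iff.mpr ⟨q, hq, rfl⟩, hkeq hp hq⟩
    · have hpq : p = q := specE_unique hp hq'
      subst hpq
      exact ⟨w.set p i, w'.set p i, hE, eop_eq_some_iff.mpr ⟨p, hq, rfl⟩, hke p hpks hp hq⟩

lemma fop_finish_noninteract {i : ℕ} {w w' : List ℕ} {ks : ℕ}
    (hlen : w'.length = w.length)
    (hagree : ∀ k, k ≠ ks → prefD i w k = prefD i w' k)
    (hf : ∃ j, j < ks ∧ prefD i w ks ≤ prefD i w j)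
    (hg : ∃ j, j < ks ∧ prefD i w' ks ≤ prefD i w' j)
    (hks : ks ≤ w.length)
    (hke : ∀ q, q ≠ ks → SpecF i w q → SpecF i w' q →
      KnuthEquiv (w.set (q-1) (i+1)) (w'.set (q-1) (i+1))) :
    FGoal i w w' := by
  rcases hF : Fop i w with _ | v
  · left
    obtain ⟨jg, hjg1, hjg3⟩ := hg
    refine ⟨hF, fop_eq_none_iff.mpr (none_transfer_F hlen hagree
      ⟨jg, by omega, ?_⟩ (fop_eq_none_iff.mp hF))⟩
    rw [hagree jg (by omega)]; exact hjg3
  · right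
    obtain ⟨q, hq, rfl⟩ := fop_eq_some_iff.mp hF
    obtain ⟨hne, hq'⟩ := specF_transfer_noninteract hlen hagree hf hg hq
    exact ⟨_, _, hF, fop_eq_some_iff.mpr ⟨q, hq', rfl⟩, hke q hne hq hq'⟩

lemma fop_finish_pair {i : ℕ} {w w' : List ℕ} {ks m : ℕ}
    (hlen : w'.length = w.length)
    (hagree : ∀ k, k ≠ ks → prefD i w k = prefD i w' k)
    (hm : ks < m) (hmlen : m ≤ w.length) (hks : ks ≤ w.length)
    (hmv : prefD i w m = prefD i w ks)
    (hlt : prefD i w' ks < prefD i w ks)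
    (hbet : ∀ j, ks < j → j < m → prefD i w j < prefD i w ks)
    (hkeq : SpecF i w ks → SpecF i w' m →
      KnuthEquiv (w.set (ks-1) (i+1)) (w'.set (m-1) (i+1)))
    (hke : ∀ q, q ≠ ks → SpecF i w q → SpecF i w' q →
      KnuthEquiv (w.set (q-1) (i+1)) (w'.set (q-1) (i+1))) :
    FGoal i w w' := by
  rcases hF : Fop i w with _ | v
  · left
    refine ⟨hF, fop_eq_none_iff.mpr (none_transfer_F hlen hagree
      ⟨ks, hks, by omega⟩ (fop_eq_none_iff.mp hF))⟩
  · right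
    obtain ⟨q, hq, rfl⟩ := fop_eq_some_iff.mp hF
    rcases specF_transfer_pair hlen hagree hm hmlen hmv hlt hbet hq with ⟨hqks, hq'⟩ | ⟨hqks, hq'⟩
    · subst hqks
      exact ⟨_, _, hF, fop_eq_some_iff.mpr ⟨m, hq', rfl⟩, hkeq hq hq'⟩
    · exact ⟨_, _, hF, fop_eq_some_iff.mpr ⟨q, hq', rfl⟩, hke q hqks hq hq'⟩

lemma fop_finish_pair' {i : ℕ} {w w' : List ℕ} {ks m : ℕ}
    (hlen : w'.length = w.length)
    (hagree : ∀ k, k ≠ ks → prefD i w k = prefD i w' k)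
    (hm : ks < m) (hmlen : m ≤ w.length) (hks : ks ≤ w.length)
    (hmv : prefD i w' m = prefD i w' ks)
    (hlt : prefD i w ks < prefD i w' ks)
    (hbet : ∀ j, ks < j → j < m → prefD i w' j < prefD i w' ks)
    (hkeq : SpecF i w m → SpecF i w' ks →
      KnuthEquiv (w.set (m-1) (i+1)) (w'.set (ks-1) (i+1)))
    (hke : ∀ q, q ≠ ks → SpecF i w q → SpecF i w' q →
      KnuthEquiv (w.set (q-1) (i+1)) (w'.set (q-1) (i+1))) :
    FGoal i w w' := by
  have hagree' : ∀ k, k ≠ ks → prefD i w' k = prefD i w k := fun k hk => (hagree k hk).symm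
  have hmm : prefD i w' m = prefD i w m := (hagree m (by omega)).symm
  rcases hF : Fop i w with _ | v
  · left
    refine ⟨hF, fop_eq_none_iff.mpr (none_transfer_F hlen hagree
      ⟨m, by omega, by omega⟩ (fop_eq_none_iff.mp hF))⟩
  · right
    obtain ⟨q, hq, rfl⟩ := fop_eq_some_iff.mp hF
    have hqks : q ≠ ks := by
      intro h
      have h1 := hq.2.2.2.1 m (by omega)
      rw [h] at h1
      omega
    have hex : ∃ q', SpecF i w' q' := by
      apply exists_specF (i := i) (w := w')
      refine ⟨q, by have := hq.1; omega, ?_⟩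
      rw [← hagree q hqks]
      exact hq.2.2.1
    obtain ⟨q', hq'⟩ := hex
    rcases specF_transfer_pair (by omega) hagree' hm (by omega) hmv hlt hbet hq' with
      ⟨hq'ks, hq''⟩ | ⟨hq'ks, hq''⟩
    · subst hq'ks
      have hqm : q = m := specF_unique hq hq''
      subst hqm
      exact ⟨_, _, hF, fop_eq_some_iff.mpr ⟨q', hq', rfl⟩, hkeq hq hq'⟩
    · have hqq : q = q' := specF_unique hq hq''
      subst hqq
      exact ⟨_, _, hF, fop_eq_some_iff.mpr ⟨q, hq', rfl⟩, hke q hqks hq hq'⟩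


lemma specE_getElem_win0 {i : ℕ} {a b : List ℕ} {c1 c2 c3 : ℕ}
    (h : SpecE i (a ++ c1::c2::c3::b) a.length) : c1 = i + 1 := by
  have h2 := h.getElem
  rwa [getElem_win0 a b c1 c2 c3 h.1] at h2

lemma specE_getElem_win2 {i : ℕ} {a b : List ℕ} {c1 c2 c3 : ℕ}
    (h : SpecE i (a ++ c1::c2::c3::b) (a.length + 2)) : c3 = i + 1 := by
  have h2 := h.getElem
  rwa [getElem_win2 a b c1 c2 c3 h.1] at h2

lemma eop_step_rel1 (i : ℕ) (a b : List ℕ) (x y z : ℕ) (h1 : x ≤ y) (h2 : y < z) :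
    EGoal i (a ++ x::z::y::b) (a ++ z::x::y::b) := by
  have hlenw : (a ++ x::z::y::b).length = a.length + 3 + b.length := by
    simp only [List.length_append, List.length_cons]; omega
  have hlen : (a ++ z::x::y::b).length = (a ++ x::z::y::b).length := by
    simp only [List.length_append, List.length_cons]
  have hagree : ∀ k, k ≠ a.length + 1 →
      suffD i (a ++ x::z::y::b) k = suffD i (a ++ z::x::y::b) k := by
    intro k hk
    rcases Nat.lt_or_ge k (a.length + 1) with hkL | hkL
    · have hkL' : k ≤ a.length := by omega
      rw [suffD_append_le _ hkL', suffD_append_le _ hkL',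
        suffD_cons_zero, suffD_cons_zero, suffD_cons_zero, suffD_cons_zero,
        suffD_cons_zero, suffD_cons_zero]
      ring
    · rcases Nat.lt_or_ge k (a.length + 3) with hk3 | hk3
      · have hk2 : k = a.length + 2 := by omega
        rw [hk2, suffD_win2, suffD_win2]
      · obtain ⟨j, rfl⟩ : ∃ j, k = a.length + 3 + j := ⟨k - (a.length+3), by omega⟩
        rw [suffD_win3, suffD_win3]
  have hf0 := suffD_win0 i a b x z y
  have hf1 := suffD_win1 i a b x z y
  have hf2 := suffD_win2 i a b x z y
  have hf3 : suffD i (a ++ x::z::y::b) (a.length + 3) = suffD i b 0 := by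
    simpa using suffD_win3 i a b x z y 0
  have hg0 := suffD_win0 i a b z x y
  have hg1 := suffD_win1 i a b z x y
  have hg2 := suffD_win2 i a b z x y
  have hg3 : suffD i (a ++ z::x::y::b) (a.length + 3) = suffD i b 0 := by
    simpa using suffD_win3 i a b z x y 0
  by_cases hx1 : x = i + 1
  · -- x = i+1 : peak in w' at ks = L+1, paired with m = L
    have hdx : dlt i x = 1 := by rw [hx1]; exact dlt_open i
    have hdz : dlt i z = 0 := dlt_other (by omega) (by omega)
    apply eop_finish_pair' (ks := a.length + 1) (m := a.length) hlen hagree (by omega) (by omega)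
    · rw [hg0, hg1, hdx, hdz]; ring
    · rw [hf1, hg1, hdx, hdz]; omega
    · intro j hj hj'; omega
    · intro _ _
      rw [set_win0, set_win1]
      exact (KnuthStep.xzy_zxy a b i y z (by omega) h2).equiv
    · intro p hne hpw hpw'
      have hplen := hpw.1
      rcases Nat.lt_or_ge p a.length with hpL | hpL
      · exact knuthEquiv_rel1_outside a b x y z h1 h2 p i (Or.inl hpL)
      rcases Nat.lt_or_ge p (a.length + 3) with hp3 | hp3
      · have : p = a.length ∨ p = a.length + 2 := by omega
        rcases this with rfl | rfl
        · have := specE_getElem_win0 hpw'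
          omega
        · exfalso
          have := hpw.2.2.1 a.length (by omega)
          rw [hf0, hf2, hdx, hdz] at this
          omega
      · exact knuthEquiv_rel1_outside a b x y z h1 h2 p i (Or.inr hp3)
  · by_cases hz1 : z = i + 1
    · have hdz : dlt i z = 1 := by rw [hz1]; exact dlt_open i
      by_cases hxi : x = i
      · -- x = i, z = i+1, so y = i : noninteract
        have hyi : y = i := by omega
        have hdx : dlt i x = -1 := by rw [hxi]; exact dlt_close i
        have hdy : dlt i y = -1 := by rw [hyi]; exact dlt_close i
        apply eop_finish_noninteract (ks := a.length + 1) hlen hagree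
          ⟨a.length + 3, by omega, by omega, by rw [hf1, hf3, hdz, hdy]; omega⟩
          ⟨a.length + 2, by omega, by omega, by rw [hg1, hg2, hdx, hdy]; omega⟩
        intro p hne hpw hpw'
        have hplen := hpw.1
        rcases Nat.lt_or_ge p a.length with hpL | hpL
        · exact knuthEquiv_rel1_outside a b x y z h1 h2 p i (Or.inl hpL)
        rcases Nat.lt_or_ge p (a.length + 3) with hp3 | hp3
        · have : p = a.length ∨ p = a.length + 2 := by omega
          rcases this with rfl | rfl
          · have := specE_getElem_win0 hpw
            omega
          · have := specE_getElem_win2 hpw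
            omega
        · exact knuthEquiv_rel1_outside a b x y z h1 h2 p i (Or.inr hp3)
      · -- x < i, z = i+1
        have hxlt : x < i := by omega
        have hdx : dlt i x = 0 := dlt_other (by omega) (by omega)
        by_cases hyi : y = i
        · -- y = i : noninteract
          have hdy : dlt i y = -1 := by rw [hyi]; exact dlt_close i
          apply eop_finish_noninteract (ks := a.length + 1) hlen hagree
            ⟨a.length + 3, by omega, by omega, by rw [hf1, hf3, hdz, hdy]; omega⟩
            ⟨a.length + 2, by omega, by omega, by rw [hg1, hg2, hdx, hdy]; omega⟩
          intro p hne hpw hpw'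
          have hplen := hpw.1
          rcases Nat.lt_or_ge p a.length with hpL | hpL
          · exact knuthEquiv_rel1_outside a b x y z h1 h2 p i (Or.inl hpL)
          rcases Nat.lt_or_ge p (a.length + 3) with hp3 | hp3
          · have : p = a.length ∨ p = a.length + 2 := by omega
            rcases this with rfl | rfl
            · have := specE_getElem_win0 hpw
              omega
            · have := specE_getElem_win2 hpw
              omega
          · exact knuthEquiv_rel1_outside a b x y z h1 h2 p i (Or.inr hp3)
        · -- y < i : pair, peak in w at ks = L+1, m = L
          have hylt : y < i := by omega
          have hdy : dlt i y = 0 := dlt_other (by omega) (by omega)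
          apply eop_finish_pair (ks := a.length + 1) (m := a.length) hlen hagree (by omega)
            (by omega)
          · rw [hf0, hf1, hdx, hdz]; ring
          · rw [hf1, hg1, hdx, hdz]; omega
          · intro j hj hj'; omega
          · intro _ _
            rw [set_win1, set_win0]
            exact (KnuthStep.xzy_zxy a b x y i h1 hylt).equiv
          · intro p hne hpw hpw'
            have hplen := hpw.1
            rcases Nat.lt_or_ge p a.length with hpL | hpL
            · exact knuthEquiv_rel1_outside a b x y z h1 h2 p i (Or.inl hpL)
            rcases Nat.lt_or_ge p (a.length + 3) with hp3 | hp3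
            · have : p = a.length ∨ p = a.length + 2 := by omega
              rcases this with rfl | rfl
              · have := specE_getElem_win0 hpw
                omega
              · have := specE_getElem_win2 hpw
                omega
            · exact knuthEquiv_rel1_outside a b x y z h1 h2 p i (Or.inr hp3)
    · -- z ≠ i+1, x ≠ i+1
      by_cases hxi : x = i
      · -- x = i, z ≥ i+2 : noninteract
        have hdx : dlt i x = -1 := by rw [hxi]; exact dlt_close i
        have hdz : dlt i z = 0 := dlt_other (by omega) hz1
        apply eop_finish_noninteract (ks := a.length + 1) hlen hagree
          ⟨a.length + 2, by omega, by omega, by rw [hf1, hf2, hdz]; omega⟩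
          ⟨a.length + 2, by omega, by omega, by rw [hg1, hg2, hdx]; omega⟩
        intro p hne hpw hpw'
        have hplen := hpw.1
        rcases Nat.lt_or_ge p a.length with hpL | hpL
        · exact knuthEquiv_rel1_outside a b x y z h1 h2 p i (Or.inl hpL)
        rcases Nat.lt_or_ge p (a.length + 3) with hp3 | hp3
        · have : p = a.length ∨ p = a.length + 2 := by omega
          rcases this with rfl | rfl
          · have := specE_getElem_win0 hpw
            omega
          · -- y = i+1 : replace y by i, still a Knuth step
            have hy1 := specE_getElem_win2 hpw
            rw [set_win2, set_win2]
            exact (KnuthStep.xzy_zxy a b x i z (by omega) (by omega)).equiv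
        · exact knuthEquiv_rel1_outside a b x y z h1 h2 p i (Or.inr hp3)
      · by_cases hzi : z = i
        · -- z = i, so x ≤ y < i : noninteract
          have hdz : dlt i z = -1 := by rw [hzi]; exact dlt_close i
          have hdx : dlt i x = 0 := dlt_other hxi hx1
          have hdy : dlt i y = 0 := dlt_other (by omega) (by omega)
          apply eop_finish_noninteract (ks := a.length + 1) hlen hagree
            ⟨a.length + 2, by omega, by omega, by rw [hf1, hf2, hdz, hdy]; omega⟩
            ⟨a.length + 2, by omega, by omega, by rw [hg1, hg2, hdx, hdy]; omega⟩
          intro p hne hpw hpw'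
          have hplen := hpw.1
          rcases Nat.lt_or_ge p a.length with hpL | hpL
          · exact knuthEquiv_rel1_outside a b x y z h1 h2 p i (Or.inl hpL)
          rcases Nat.lt_or_ge p (a.length + 3) with hp3 | hp3
          · have : p = a.length ∨ p = a.length + 2 := by omega
            rcases this with rfl | rfl
            · have := specE_getElem_win0 hpw
              omega
            · have := specE_getElem_win2 hpw
              omega
          · exact knuthEquiv_rel1_outside a b x y z h1 h2 p i (Or.inr hp3)
        · -- x, z ∉ {i, i+1} : noninteract
          have hdx : dlt i x = 0 := dlt_other hxi hx1
          have hdz : dlt i z = 0 := dlt_other hzi hz1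
          apply eop_finish_noninteract (ks := a.length + 1) hlen hagree
            ⟨a.length + 2, by omega, by omega, by rw [hf1, hf2, hdz]; omega⟩
            ⟨a.length + 2, by omega, by omega, by rw [hg1, hg2, hdx]; omega⟩
          intro p hne hpw hpw'
          have hplen := hpw.1
          rcases Nat.lt_or_ge p a.length with hpL | hpL
          · exact knuthEquiv_rel1_outside a b x y z h1 h2 p i (Or.inl hpL)
          rcases Nat.lt_or_ge p (a.length + 3) with hp3 | hp3
          · have : p = a.length ∨ p = a.length + 2 := by omega
            rcases this with rfl | rfl
            · have := specE_getElem_win0 hpw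
              omega
            · have hy1 := specE_getElem_win2 hpw
              rw [set_win2, set_win2]
              exact (KnuthStep.xzy_zxy a b x i z (by omega) (by omega)).equiv
          · exact knuthEquiv_rel1_outside a b x y z h1 h2 p i (Or.inr hp3)


lemma specE_getElem_win1 {i : ℕ} {a b : List ℕ} {c1 c2 c3 : ℕ}
    (h : SpecE i (a ++ c1::c2::c3::b) (a.length + 1)) : c2 = i + 1 := by
  have h2 := h.getElem
  rwa [getElem_win1 a b c1 c2 c3 h.1] at h2

lemma eop_step_rel2 (i : ℕ) (a b : List ℕ) (x y z : ℕ) (h1 : x < y) (h2 : y ≤ z) :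
    EGoal i (a ++ y::x::z::b) (a ++ y::z::x::b) := by
  have hlenw : (a ++ y::x::z::b).length = a.length + 3 + b.length := by
    simp only [List.length_append, List.length_cons]; omega
  have hlen : (a ++ y::z::x::b).length = (a ++ y::x::z::b).length := by
    simp only [List.length_append, List.length_cons]
  have hf0 := suffD_win0 i a b y x z
  have hf1 := suffD_win1 i a b y x z
  have hf2 := suffD_win2 i a b y x z
  have hf3 : suffD i (a ++ y::x::z::b) (a.length + 3) = suffD i b 0 := by
    simpa using suffD_win3 i a b y x z 0
  have hg0 := suffD_win0 i a b y z x
  have hg1 := suffD_win1 i a b y z x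
  have hg2 := suffD_win2 i a b y z x
  have hg3 : suffD i (a ++ y::z::x::b) (a.length + 3) = suffD i b 0 := by
    simpa using suffD_win3 i a b y z x 0
  have hagree : ∀ k, k ≠ a.length + 2 →
      suffD i (a ++ y::x::z::b) k = suffD i (a ++ y::z::x::b) k := by
    intro k hk
    rcases Nat.lt_or_ge k (a.length + 1) with hkL | hkL
    · have hkL' : k ≤ a.length := by omega
      rw [suffD_append_le _ hkL', suffD_append_le _ hkL',
        suffD_cons_zero, suffD_cons_zero, suffD_cons_zero, suffD_cons_zero,
        suffD_cons_zero, suffD_cons_zero]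
      ring
    · rcases Nat.lt_or_ge k (a.length + 3) with hk3 | hk3
      · have hk2 : k = a.length + 1 := by omega
        rw [hk2, hf1, hg1]; ring
      · obtain ⟨j, rfl⟩ : ∃ j, k = a.length + 3 + j := ⟨k - (a.length+3), by omega⟩
        rw [suffD_win3, suffD_win3]
  by_cases hzi : z = i
  · -- z = i, so x < y ≤ i : noninteract
    have hdz : dlt i z = -1 := by rw [hzi]; exact dlt_close i
    have hdx : dlt i x = 0 := dlt_other (by omega) (by omega)
    apply eop_finish_noninteract (ks := a.length + 2) hlen hagree
      ⟨a.length + 3, by omega, by omega, by rw [hf2, hf3, hdz]; omega⟩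
      ⟨a.length + 3, by omega, by omega, by rw [hg2, hg3, hdx]; omega⟩
    intro p hne hpw hpw'
    have hplen := hpw.1
    rcases Nat.lt_or_ge p a.length with hpL | hpL
    · exact knuthEquiv_rel2_outside a b x y z h1 h2 p i (Or.inl hpL)
    rcases Nat.lt_or_ge p (a.length + 3) with hp3 | hp3
    · have : p = a.length ∨ p = a.length + 1 := by omega
      rcases this with rfl | rfl
      · have := specE_getElem_win0 hpw
        omega
      · have := specE_getElem_win1 hpw
        omega
    · exact knuthEquiv_rel2_outside a b x y z h1 h2 p i (Or.inr hp3)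
  · by_cases hz1 : z = i + 1
    · have hdz : dlt i z = 1 := by rw [hz1]; exact dlt_open i
      by_cases hxi : x = i
      · -- x = i, z = i+1, so y = i+1 : pair, peak in w at ks = L+2, m = L
        have hyi : y = i + 1 := by omega
        have hdx : dlt i x = -1 := by rw [hxi]; exact dlt_close i
        have hdy : dlt i y = 1 := by rw [hyi]; exact dlt_open i
        apply eop_finish_pair (ks := a.length + 2) (m := a.length) hlen hagree (by omega)
          (by omega)
        · rw [hf0, hf2, hdx, hdy, hdz]; ring
        · rw [hf2, hg2, hdx, hdz]; omega
        · intro j hj hj'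
          have : j = a.length + 1 := by omega
          rw [this, hf1, hf2, hdx, hdz]; omega
        · intro _ _
          rw [set_win2, set_win0]
          rw [hxi, hyi, hz1]
          exact (KnuthStep.xzy_zxy a b i i (i+1) le_rfl (by omega)).equiv'
        · intro p hne hpw hpw'
          have hplen := hpw.1
          rcases Nat.lt_or_ge p a.length with hpL | hpL
          · exact knuthEquiv_rel2_outside a b x y z h1 h2 p i (Or.inl hpL)
          rcases Nat.lt_or_ge p (a.length + 3) with hp3 | hp3
          · have : p = a.length ∨ p = a.length + 1 := by omega
            rcases this with rfl | rfl
            · exfalso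
              have := hpw.2.2.2 (a.length + 2) (by omega) (by omega)
              rw [hf0, hf2, hdx, hdy, hdz] at this
              omega
            · have := specE_getElem_win1 hpw
              omega
          · exact knuthEquiv_rel2_outside a b x y z h1 h2 p i (Or.inr hp3)
      · -- x < i, z = i+1 : pair, peak in w at ks = L+2, m = L+1
        have hxlt : x < i := by omega
        have hdx : dlt i x = 0 := dlt_other hxi (by omega)
        apply eop_finish_pair (ks := a.length + 2) (m := a.length + 1) hlen hagree (by omega)
          (by omega)
        · rw [hf1, hf2, hdx]; ring
        · rw [hf2, hg2, hdx, hdz]; omega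
        · intro j hj hj'; omega
        · intro hpw _
          have hyle : y ≤ i := by
            by_contra hy
            have hy1 : y = i + 1 := by omega
            have := hpw.2.2.1 a.length (by omega)
            rw [hf0, hf2, hdx, hdz, hy1, dlt_open] at this
            omega
          rw [set_win2, set_win1]
          exact (KnuthStep.yxz_yzx a b x y i h1 hyle).equiv
        · intro p hne hpw hpw'
          have hplen := hpw.1
          rcases Nat.lt_or_ge p a.length with hpL | hpL
          · exact knuthEquiv_rel2_outside a b x y z h1 h2 p i (Or.inl hpL)
          rcases Nat.lt_or_ge p (a.length + 3) with hp3 | hp3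
          · have : p = a.length ∨ p = a.length + 1 := by omega
            rcases this with rfl | rfl
            · have hy1 := specE_getElem_win0 hpw
              rw [set_win0, set_win0]
              exact (KnuthStep.yxz_yzx a b x i z hxlt (by omega)).equiv
            · have := specE_getElem_win1 hpw
              omega
          · exact knuthEquiv_rel2_outside a b x y z h1 h2 p i (Or.inr hp3)
    · -- z ∉ {i, i+1}
      have hdz : dlt i z = 0 := dlt_other hzi hz1
      by_cases hxi : x = i
      · -- x = i : noninteract
        have hdx : dlt i x = -1 := by rw [hxi]; exact dlt_close i
        apply eop_finish_noninteract (ks := a.length + 2) hlen hagree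
          ⟨a.length + 3, by omega, by omega, by rw [hf2, hf3, hdz]; omega⟩
          ⟨a.length + 3, by omega, by omega, by rw [hg2, hg3, hdx]; omega⟩
        intro p hne hpw hpw'
        have hplen := hpw.1
        rcases Nat.lt_or_ge p a.length with hpL | hpL
        · exact knuthEquiv_rel2_outside a b x y z h1 h2 p i (Or.inl hpL)
        rcases Nat.lt_or_ge p (a.length + 3) with hp3 | hp3
        · have : p = a.length ∨ p = a.length + 1 := by omega
          rcases this with rfl | rfl
          · exfalso
            have hy1 := specE_getElem_win0 hpw
            have := hpw.2.2.2 (a.length + 3) (by omega) (by omega)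
            rw [hf0, hf3, hdx, hdz, hy1, dlt_open] at this
            omega
          · have := specE_getElem_win1 hpw
            omega
        · exact knuthEquiv_rel2_outside a b x y z h1 h2 p i (Or.inr hp3)
      · by_cases hx1 : x = i + 1
        · -- x = i+1 : peak in w' at ks = L+2, m = L+1, pair'
          have hdx : dlt i x = 1 := by rw [hx1]; exact dlt_open i
          have hylt : i + 1 < y := by omega
          apply eop_finish_pair' (ks := a.length + 2) (m := a.length + 1) hlen hagree (by omega)
            (by omega)
          · rw [hg1, hg2, hdz]; ring
          · rw [hf2, hg2, hdx, hdz]; omega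
          · intro j hj hj'; omega
          · intro _ _
            rw [set_win1, set_win2]
            exact (KnuthStep.yxz_yzx a b i y z (by omega) h2).equiv
          · intro p hne hpw hpw'
            have hplen := hpw.1
            rcases Nat.lt_or_ge p a.length with hpL | hpL
            · exact knuthEquiv_rel2_outside a b x y z h1 h2 p i (Or.inl hpL)
            rcases Nat.lt_or_ge p (a.length + 3) with hp3 | hp3
            · have : p = a.length ∨ p = a.length + 1 := by omega
              rcases this with rfl | rfl
              · have := specE_getElem_win0 hpw
                omega
              · have := specE_getElem_win1 hpw'
                omega
            · exact knuthEquiv_rel2_outside a b x y z h1 h2 p i (Or.inr hp3)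
        · -- x ∉ {i, i+1} : noninteract
          have hdx : dlt i x = 0 := dlt_other hxi hx1
          apply eop_finish_noninteract (ks := a.length + 2) hlen hagree
            ⟨a.length + 3, by omega, by omega, by rw [hf2, hf3, hdz]; omega⟩
            ⟨a.length + 3, by omega, by omega, by rw [hg2, hg3, hdx]; omega⟩
          intro p hne hpw hpw'
          have hplen := hpw.1
          rcases Nat.lt_or_ge p a.length with hpL | hpL
          · exact knuthEquiv_rel2_outside a b x y z h1 h2 p i (Or.inl hpL)
          rcases Nat.lt_or_ge p (a.length + 3) with hp3 | hp3
          · have : p = a.length ∨ p = a.length + 1 := by omega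
            rcases this with rfl | rfl
            · have hy1 := specE_getElem_win0 hpw
              rw [set_win0, set_win0]
              exact (KnuthStep.yxz_yzx a b x i z (by omega) (by omega)).equiv
            · have := specE_getElem_win1 hpw
              omega
          · exact knuthEquiv_rel2_outside a b x y z h1 h2 p i (Or.inr hp3)


lemma specF_getElem_win0 {i : ℕ} {a b : List ℕ} {c1 c2 c3 : ℕ}
    (h : SpecF i (a ++ c1::c2::c3::b) (a.length + 1)) : c1 = i := by
  have h2 := h.getElem
  simp only [show a.length + 1 - 1 = a.length by omega] at h2
  rwa [getElem_win0 a b c1 c2 c3 (by simpa [show a.length+1-1 = a.length by omega] using h.pred_lt)] at h2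

lemma specF_getElem_win1 {i : ℕ} {a b : List ℕ} {c1 c2 c3 : ℕ}
    (h : SpecF i (a ++ c1::c2::c3::b) (a.length + 2)) : c2 = i := by
  have h2 := h.getElem
  simp only [show a.length + 2 - 1 = a.length + 1 by omega] at h2
  rwa [getElem_win1 a b c1 c2 c3 (by simpa [show a.length+2-1 = a.length+1 by omega] using h.pred_lt)] at h2

lemma specF_getElem_win2 {i : ℕ} {a b : List ℕ} {c1 c2 c3 : ℕ}
    (h : SpecF i (a ++ c1::c2::c3::b) (a.length + 3)) : c3 = i := by
  have h2 := h.getElem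
  simp only [show a.length + 3 - 1 = a.length + 2 by omega] at h2
  rwa [getElem_win2 a b c1 c2 c3 (by simpa [show a.length+3-1 = a.length+2 by omega] using h.pred_lt)] at h2

lemma fop_step_rel1 (i : ℕ) (a b : List ℕ) (x y z : ℕ) (h1 : x ≤ y) (h2 : y < z) :
    FGoal i (a ++ x::z::y::b) (a ++ z::x::y::b) := by
  have hlenw : (a ++ x::z::y::b).length = a.length + 3 + b.length := by
    simp only [List.length_append, List.length_cons]; omega
  have hlen : (a ++ z::x::y::b).length = (a ++ x::z::y::b).length := by
    simp only [List.length_append, List.length_cons]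
  have hf0 := prefD_win0 i a b x z y
  have hf1 := prefD_win1 i a b x z y
  have hf2 := prefD_win2 i a b x z y
  have hf3 : prefD i (a ++ x::z::y::b) (a.length + 3) =
      prefD i a a.length + dltF i x + dltF i z + dltF i y := by
    have h := prefD_win3 i a b x z y 0
    rw [prefD_zero] at h
    simpa using h
  have hg0 := prefD_win0 i a b z x y
  have hg1 := prefD_win1 i a b z x y
  have hg2 := prefD_win2 i a b z x y
  have hg3 : prefD i (a ++ z::x::y::b) (a.length + 3) =
      prefD i a a.length + dltF i z + dltF i x + dltF i y := by
    have h := prefD_win3 i a b z x y 0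
    rw [prefD_zero] at h
    simpa using h
  have hagree : ∀ k, k ≠ a.length + 1 →
      prefD i (a ++ x::z::y::b) k = prefD i (a ++ z::x::y::b) k := by
    intro k hk
    rcases Nat.lt_or_ge k (a.length + 1) with hkL | hkL
    · have hkL' : k ≤ a.length := by omega
      rw [prefD_append_le _ hkL', prefD_append_le _ hkL']
    · rcases Nat.lt_or_ge k (a.length + 3) with hk3 | hk3
      · have hk2 : k = a.length + 2 := by omega
        rw [hk2, hf2, hg2]; ring
      · obtain ⟨j, rfl⟩ : ∃ j, k = a.length + 3 + j := ⟨k - (a.length+3), by omega⟩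
        rw [prefD_win3, prefD_win3]; ring
  by_cases hxi : x = i
  · -- x = i : peak in w at ks = L+1
    have hdx : dltF i x = 1 := by rw [hxi]; exact dltF_close i
    by_cases hz1 : z = i + 1
    · -- z = i+1, so y = i : pair with m = L+3
      have hyi : y = i := by omega
      have hdz : dltF i z = -1 := by rw [hz1]; exact dltF_open i
      have hdy : dltF i y = 1 := by rw [hyi]; exact dltF_close i
      apply fop_finish_pair (ks := a.length + 1) (m := a.length + 3) hlen hagree (by omega)
        (by omega) (by omega)
      · rw [hf1, hf3, hdx, hdz, hdy]; ring
      · rw [hf1, hg1, hdx, hdz]; omega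
      · intro j hj hj'
        have : j = a.length + 2 := by omega
        rw [this, hf1, hf2, hdx, hdz]; omega
      · intro _ _
        rw [show a.length + 1 - 1 = a.length by omega, show a.length + 3 - 1 = a.length + 2 by omega]
        rw [set_win0, set_win2]
        rw [hxi, hz1, hyi]
        exact (KnuthStep.yxz_yzx a b i (i+1) (i+1) (by omega) le_rfl).equiv'
      · intro q hne hpw hpw'
        have hqlen := hpw.1
        have hq0 := hpw.2.1
        rcases Nat.lt_or_ge q (a.length + 1) with hqL | hqL
        · exact knuthEquiv_rel1_outside a b x y z h1 h2 (q-1) (i+1) (Or.inl (by omega))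
        rcases Nat.lt_or_ge q (a.length + 4) with hq3 | hq3
        · have : q = a.length + 2 ∨ q = a.length + 3 := by omega
          rcases this with rfl | rfl
          · have := specF_getElem_win1 hpw
            omega
          · exfalso
            have := hpw.2.2.2.2 (a.length + 1) (by omega)
            rw [hf1, hf3, hdx, hdz, hdy] at this
            omega
        · exact knuthEquiv_rel1_outside a b x y z h1 h2 (q-1) (i+1) (Or.inr (by omega))
    · -- z ≥ i+2 : pair with m = L+2
      have hdz : dltF i z = 0 := dltF_other (by omega) hz1
      apply fop_finish_pair (ks := a.length + 1) (m := a.length + 2) hlen hagree (by omega)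
        (by omega) (by omega)
      · rw [hf1, hf2, hdz]; ring
      · rw [hf1, hg1, hdx, hdz]; omega
      · intro j hj hj'; omega
      · intro hpw _
        have hyge : i + 1 ≤ y := by
          rcases Nat.lt_or_ge y (i+1) with hy | hy
          · exfalso
            have hyi : y = i := by omega
            have := hpw.2.2.2.1 (a.length + 3) (by omega)
            rw [hf1, hf3, hdx, hdz, hyi, dltF_close] at this
            omega
          · exact hy
        rw [show a.length + 1 - 1 = a.length by omega, show a.length + 2 - 1 = a.length + 1 by omega]
        rw [set_win0, set_win1]
        exact (KnuthStep.xzy_zxy a b (i+1) y z hyge h2).equiv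
      · intro q hne hpw hpw'
        have hqlen := hpw.1
        have hq0 := hpw.2.1
        rcases Nat.lt_or_ge q (a.length + 1) with hqL | hqL
        · exact knuthEquiv_rel1_outside a b x y z h1 h2 (q-1) (i+1) (Or.inl (by omega))
        rcases Nat.lt_or_ge q (a.length + 4) with hq3 | hq3
        · have : q = a.length + 2 ∨ q = a.length + 3 := by omega
          rcases this with rfl | rfl
          · have := specF_getElem_win1 hpw
            omega
          · have hyi := specF_getElem_win2 hpw
            rw [show a.length + 3 - 1 = a.length + 2 by omega, set_win2, set_win2]
            rw [hxi]
            exact (KnuthStep.xzy_zxy a b i (i+1) z (by omega) (by omega)).equiv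
        · exact knuthEquiv_rel1_outside a b x y z h1 h2 (q-1) (i+1) (Or.inr (by omega))
  · by_cases hx1 : x = i + 1
    · -- x = i+1, so y ≥ i+1, z ≥ i+2 : noninteract
      have hdx : dltF i x = -1 := by rw [hx1]; exact dltF_open i
      have hdz : dltF i z = 0 := dltF_other (by omega) (by omega)
      apply fop_finish_noninteract (ks := a.length + 1) hlen hagree
        ⟨a.length, by omega, by rw [hf0, hf1, hdx]; omega⟩
        ⟨a.length, by omega, by rw [hg0, hg1, hdz]; omega⟩
        (by omega)
      intro q hne hpw hpw'
      have hqlen := hpw.1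
      have hq0 := hpw.2.1
      rcases Nat.lt_or_ge q (a.length + 1) with hqL | hqL
      · exact knuthEquiv_rel1_outside a b x y z h1 h2 (q-1) (i+1) (Or.inl (by omega))
      rcases Nat.lt_or_ge q (a.length + 4) with hq3 | hq3
      · have : q = a.length + 2 ∨ q = a.length + 3 := by omega
        rcases this with rfl | rfl
        · have := specF_getElem_win1 hpw
          omega
        · have := specF_getElem_win2 hpw
          omega
      · exact knuthEquiv_rel1_outside a b x y z h1 h2 (q-1) (i+1) (Or.inr (by omega))
    · -- x ∉ {i, i+1}
      have hdx : dltF i x = 0 := dltF_other hxi hx1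
      by_cases hzi : z = i
      · -- z = i : peak in w' at ks = L+1, pair' with m = L+2
        have hdz : dltF i z = 1 := by rw [hzi]; exact dltF_close i
        apply fop_finish_pair' (ks := a.length + 1) (m := a.length + 2) hlen hagree (by omega)
          (by omega) (by omega)
        · rw [hg1, hg2, hdx]; ring
        · rw [hf1, hg1, hdx, hdz]; omega
        · intro j hj hj'; omega
        · intro _ _
          rw [show a.length + 2 - 1 = a.length + 1 by omega, show a.length + 1 - 1 = a.length by omega]
          rw [set_win1, set_win0]
          exact (KnuthStep.xzy_zxy a b x y (i+1) h1 (by omega)).equiv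
        · intro q hne hpw hpw'
          have hqlen := hpw.1
          have hq0 := hpw.2.1
          rcases Nat.lt_or_ge q (a.length + 1) with hqL | hqL
          · exact knuthEquiv_rel1_outside a b x y z h1 h2 (q-1) (i+1) (Or.inl (by omega))
          rcases Nat.lt_or_ge q (a.length + 4) with hq3 | hq3
          · have : q = a.length + 2 ∨ q = a.length + 3 := by omega
            rcases this with rfl | rfl
            · have := specF_getElem_win1 hpw'
              omega
            · have := specF_getElem_win2 hpw
              omega
          · exact knuthEquiv_rel1_outside a b x y z h1 h2 (q-1) (i+1) (Or.inr (by omega))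
      · by_cases hz1 : z = i + 1
        · -- z = i+1 : noninteract
          have hdz : dltF i z = -1 := by rw [hz1]; exact dltF_open i
          apply fop_finish_noninteract (ks := a.length + 1) hlen hagree
            ⟨a.length, by omega, by rw [hf0, hf1, hdx]; omega⟩
            ⟨a.length, by omega, by rw [hg0, hg1, hdz]; omega⟩
            (by omega)
          intro q hne hpw hpw'
          have hqlen := hpw.1
          have hq0 := hpw.2.1
          rcases Nat.lt_or_ge q (a.length + 1) with hqL | hqL
          · exact knuthEquiv_rel1_outside a b x y z h1 h2 (q-1) (i+1) (Or.inl (by omega))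
          rcases Nat.lt_or_ge q (a.length + 4) with hq3 | hq3
          · have : q = a.length + 2 ∨ q = a.length + 3 := by omega
            rcases this with rfl | rfl
            · have := specF_getElem_win1 hpw
              omega
            · exfalso
              have hyi := specF_getElem_win2 hpw
              have := hpw.2.2.2.2 a.length (by omega)
              rw [hf0, hf3, hdx, hdz, hyi, dltF_close] at this
              omega
          · exact knuthEquiv_rel1_outside a b x y z h1 h2 (q-1) (i+1) (Or.inr (by omega))
        · -- z ∉ {i, i+1} : noninteract
          have hdz : dltF i z = 0 := dltF_other hzi hz1
          apply fop_finish_noninteract (ks := a.length + 1) hlen hagree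
            ⟨a.length, by omega, by rw [hf0, hf1, hdx]; omega⟩
            ⟨a.length, by omega, by rw [hg0, hg1, hdz]; omega⟩
            (by omega)
          intro q hne hpw hpw'
          have hqlen := hpw.1
          have hq0 := hpw.2.1
          rcases Nat.lt_or_ge q (a.length + 1) with hqL | hqL
          · exact knuthEquiv_rel1_outside a b x y z h1 h2 (q-1) (i+1) (Or.inl (by omega))
          rcases Nat.lt_or_ge q (a.length + 4) with hq3 | hq3
          · have : q = a.length + 2 ∨ q = a.length + 3 := by omega
            rcases this with rfl | rfl
            · have := specF_getElem_win1 hpw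
              omega
            · have hyi := specF_getElem_win2 hpw
              rw [show a.length + 3 - 1 = a.length + 2 by omega, set_win2, set_win2]
              exact (KnuthStep.xzy_zxy a b x (i+1) z (by omega) (by omega)).equiv
          · exact knuthEquiv_rel1_outside a b x y z h1 h2 (q-1) (i+1) (Or.inr (by omega))


lemma fop_step_rel2 (i : ℕ) (a b : List ℕ) (x y z : ℕ) (h1 : x < y) (h2 : y ≤ z) :
    FGoal i (a ++ y::x::z::b) (a ++ y::z::x::b) := by
  have hlenw : (a ++ y::x::z::b).length = a.length + 3 + b.length := by
    simp only [List.length_append, List.length_cons]; omega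
  have hlen : (a ++ y::z::x::b).length = (a ++ y::x::z::b).length := by
    simp only [List.length_append, List.length_cons]
  have hf0 := prefD_win0 i a b y x z
  have hf1 := prefD_win1 i a b y x z
  have hf2 := prefD_win2 i a b y x z
  have hf3 : prefD i (a ++ y::x::z::b) (a.length + 3) =
      prefD i a a.length + dltF i y + dltF i x + dltF i z := by
    have h := prefD_win3 i a b y x z 0
    rw [prefD_zero] at h
    simpa using h
  have hg0 := prefD_win0 i a b y z x
  have hg1 := prefD_win1 i a b y z x
  have hg2 := prefD_win2 i a b y z x
  have hg3 : prefD i (a ++ y::z::x::b) (a.length + 3) =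
      prefD i a a.length + dltF i y + dltF i z + dltF i x := by
    have h := prefD_win3 i a b y z x 0
    rw [prefD_zero] at h
    simpa using h
  have hagree : ∀ k, k ≠ a.length + 2 →
      prefD i (a ++ y::x::z::b) k = prefD i (a ++ y::z::x::b) k := by
    intro k hk
    rcases Nat.lt_or_ge k (a.length + 1) with hkL | hkL
    · have hkL' : k ≤ a.length := by omega
      rw [prefD_append_le _ hkL', prefD_append_le _ hkL']
    · rcases Nat.lt_or_ge k (a.length + 3) with hk3 | hk3
      · have hk2 : k = a.length + 1 := by omega
        rw [hk2, hf1, hg1]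
      · obtain ⟨j, rfl⟩ : ∃ j, k = a.length + 3 + j := ⟨k - (a.length+3), by omega⟩
        rw [prefD_win3, prefD_win3]; ring
  by_cases hxi : x = i
  · -- x = i, so y ≥ i+1
    have hdx : dltF i x = 1 := by rw [hxi]; exact dltF_close i
    by_cases hz1 : z = i + 1
    · -- z = i+1, so y = i+1 : noninteract
      have hyi : y = i + 1 := by omega
      have hdz : dltF i z = -1 := by rw [hz1]; exact dltF_open i
      have hdy : dltF i y = -1 := by rw [hyi]; exact dltF_open i
      apply fop_finish_noninteract (ks := a.length + 2) hlen hagree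
        ⟨a.length, by omega, by rw [hf0, hf2, hdx, hdy]; omega⟩
        ⟨a.length, by omega, by rw [hg0, hg2, hdz, hdy]; omega⟩
        (by omega)
      intro q hne hpw hpw'
      have hqlen := hpw.1
      have hq0 := hpw.2.1
      rcases Nat.lt_or_ge q (a.length + 1) with hqL | hqL
      · exact knuthEquiv_rel2_outside a b x y z h1 h2 (q-1) (i+1) (Or.inl (by omega))
      rcases Nat.lt_or_ge q (a.length + 4) with hq3 | hq3
      · have : q = a.length + 1 ∨ q = a.length + 3 := by omega
        rcases this with rfl | rfl
        · have := specF_getElem_win0 hpw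
          omega
        · have := specF_getElem_win2 hpw
          omega
      · exact knuthEquiv_rel2_outside a b x y z h1 h2 (q-1) (i+1) (Or.inr (by omega))
    · -- z ≥ i+2 : pair, peak in w at ks = L+2, m = L+3
      have hdz : dltF i z = 0 := dltF_other (by omega) hz1
      apply fop_finish_pair (ks := a.length + 2) (m := a.length + 3) hlen hagree (by omega)
        (by omega) (by omega)
      · rw [hf2, hf3, hdz]; ring
      · rw [hf2, hg2, hdx, hdz]; omega
      · intro j hj hj'; omega
      · intro hpw _
        have hyge : i + 1 < y := by
          rcases Nat.lt_or_ge y (i+2) with hy | hy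
          · exfalso
            have hy1 : y = i + 1 := by omega
            have := hpw.2.2.2.2 a.length (by omega)
            rw [hf0, hf2, hdx, hy1, dltF_open] at this
            omega
          · omega
        rw [show a.length + 2 - 1 = a.length + 1 by omega, show a.length + 3 - 1 = a.length + 2 by omega]
        rw [set_win1, set_win2]
        exact (KnuthStep.yxz_yzx a b (i+1) y z hyge h2).equiv
      · intro q hne hpw hpw'
        have hqlen := hpw.1
        have hq0 := hpw.2.1
        rcases Nat.lt_or_ge q (a.length + 1) with hqL | hqL
        · exact knuthEquiv_rel2_outside a b x y z h1 h2 (q-1) (i+1) (Or.inl (by omega))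
        rcases Nat.lt_or_ge q (a.length + 4) with hq3 | hq3
        · have : q = a.length + 1 ∨ q = a.length + 3 := by omega
          rcases this with rfl | rfl
          · exfalso
            have hyi := specF_getElem_win0 hpw
            omega
          · have := specF_getElem_win2 hpw
            omega
        · exact knuthEquiv_rel2_outside a b x y z h1 h2 (q-1) (i+1) (Or.inr (by omega))
  · by_cases hx1 : x = i + 1
    · -- x = i+1, so y, z ≥ i+2 : noninteract
      have hdx : dltF i x = -1 := by rw [hx1]; exact dltF_open i
      apply fop_finish_noninteract (ks := a.length + 2) hlen hagree
        ⟨a.length + 1, by omega, by rw [hf1, hf2, hdx]; omega⟩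
        ⟨a.length + 1, by omega, by rw [hg1, hg2, dltF_other (show z ≠ i by omega) (show z ≠ i + 1 by omega)]; omega⟩
        (by omega)
      intro q hne hpw hpw'
      have hqlen := hpw.1
      have hq0 := hpw.2.1
      rcases Nat.lt_or_ge q (a.length + 1) with hqL | hqL
      · exact knuthEquiv_rel2_outside a b x y z h1 h2 (q-1) (i+1) (Or.inl (by omega))
      rcases Nat.lt_or_ge q (a.length + 4) with hq3 | hq3
      · have : q = a.length + 1 ∨ q = a.length + 3 := by omega
        rcases this with rfl | rfl
        · have := specF_getElem_win0 hpw
          omega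
        · have := specF_getElem_win2 hpw
          omega
      · exact knuthEquiv_rel2_outside a b x y z h1 h2 (q-1) (i+1) (Or.inr (by omega))
    · -- x ∉ {i, i+1}
      have hdx : dltF i x = 0 := dltF_other hxi hx1
      by_cases hzi : z = i
      · -- z = i : peak in w' at ks = L+2, pair' with m = L+3
        have hdz : dltF i z = 1 := by rw [hzi]; exact dltF_close i
        apply fop_finish_pair' (ks := a.length + 2) (m := a.length + 3) hlen hagree (by omega)
          (by omega) (by omega)
        · rw [hg2, hg3, hdx]; ring
        · rw [hf2, hg2, hdx, hdz]; omega
        · intro j hj hj'; omega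
        · intro _ _
          rw [show a.length + 3 - 1 = a.length + 2 by omega, show a.length + 2 - 1 = a.length + 1 by omega]
          rw [set_win2, set_win1]
          exact (KnuthStep.yxz_yzx a b x y (i+1) h1 (by omega)).equiv
        · intro q hne hpw hpw'
          have hqlen := hpw.1
          have hq0 := hpw.2.1
          rcases Nat.lt_or_ge q (a.length + 1) with hqL | hqL
          · exact knuthEquiv_rel2_outside a b x y z h1 h2 (q-1) (i+1) (Or.inl (by omega))
          rcases Nat.lt_or_ge q (a.length + 4) with hq3 | hq3
          · have : q = a.length + 1 ∨ q = a.length + 3 := by omega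
            rcases this with rfl | rfl
            · exfalso
              have hyi := specF_getElem_win0 hpw
              have := hpw'.2.2.2.1 (a.length + 2) (by omega)
              rw [hg1, hg2, hdz, hyi, dltF_close] at this
              omega
            · exfalso
              have := hpw'.2.2.2.2 (a.length + 2) (by omega)
              rw [hg2, hg3, hdx] at this
              omega
          · exact knuthEquiv_rel2_outside a b x y z h1 h2 (q-1) (i+1) (Or.inr (by omega))
      · by_cases hz1 : z = i + 1
        · -- z = i+1 : noninteract
          have hdz : dltF i z = -1 := by rw [hz1]; exact dltF_open i
          apply fop_finish_noninteract (ks := a.length + 2) hlen hagree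
            ⟨a.length + 1, by omega, by rw [hf1, hf2, hdx]; omega⟩
            ⟨a.length + 1, by omega, by rw [hg1, hg2, hdz]; omega⟩
            (by omega)
          intro q hne hpw hpw'
          have hqlen := hpw.1
          have hq0 := hpw.2.1
          rcases Nat.lt_or_ge q (a.length + 1) with hqL | hqL
          · exact knuthEquiv_rel2_outside a b x y z h1 h2 (q-1) (i+1) (Or.inl (by omega))
          rcases Nat.lt_or_ge q (a.length + 4) with hq3 | hq3
          · have : q = a.length + 1 ∨ q = a.length + 3 := by omega
            rcases this with rfl | rfl
            · have hyi := specF_getElem_win0 hpw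
              rw [show a.length + 1 - 1 = a.length by omega, set_win0, set_win0]
              exact (KnuthStep.yxz_yzx a b x (i+1) z (by omega) (by omega)).equiv
            · have := specF_getElem_win2 hpw
              omega
          · exact knuthEquiv_rel2_outside a b x y z h1 h2 (q-1) (i+1) (Or.inr (by omega))
        · -- z ∉ {i, i+1} : noninteract
          have hdz : dltF i z = 0 := dltF_other hzi hz1
          apply fop_finish_noninteract (ks := a.length + 2) hlen hagree
            ⟨a.length + 1, by omega, by rw [hf1, hf2, hdx]; omega⟩
            ⟨a.length + 1, by omega, by rw [hg1, hg2, hdz]; omega⟩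
            (by omega)
          intro q hne hpw hpw'
          have hqlen := hpw.1
          have hq0 := hpw.2.1
          rcases Nat.lt_or_ge q (a.length + 1) with hqL | hqL
          · exact knuthEquiv_rel2_outside a b x y z h1 h2 (q-1) (i+1) (Or.inl (by omega))
          rcases Nat.lt_or_ge q (a.length + 4) with hq3 | hq3
          · have : q = a.length + 1 ∨ q = a.length + 3 := by omega
            rcases this with rfl | rfl
            · have hyi := specF_getElem_win0 hpw
              rw [show a.length + 1 - 1 = a.length by omega, set_win0, set_win0]
              exact (KnuthStep.yxz_yzx a b x (i+1) z (by omega) (by omega)).equiv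
            · have := specF_getElem_win2 hpw
              omega
          · exact knuthEquiv_rel2_outside a b x y z h1 h2 (q-1) (i+1) (Or.inr (by omega))


lemma knuthStep_EF (i : ℕ) {w w' : List ℕ} (h : KnuthStep w w') :
    EGoal i w w' ∧ FGoal i w w' := by
  cases h with
  | xzy_zxy a b x y z h1 h2 =>
    exact ⟨eop_step_rel1 i a b x y z h1 h2, fop_step_rel1 i a b x y z h1 h2⟩
  | yxz_yzx a b x y z h1 h2 =>
    exact ⟨eop_step_rel2 i a b x y z h1 h2, fop_step_rel2 i a b x y z h1 h2⟩

lemma egoal_refl (i : ℕ) (w : List ℕ) : EGoal i w w := by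
  rcases h : Eop i w with _ | v
  · exact Or.inl ⟨h, h⟩
  · exact Or.inr ⟨v, v, h, h, Relation.EqvGen.refl v⟩

lemma egoal_symm {i : ℕ} {w w' : List ℕ} (h : EGoal i w w') : EGoal i w' w := by
  rcases h with ⟨h1, h2⟩ | ⟨v, v', hv, hv', he⟩
  · exact Or.inl ⟨h2, h1⟩
  · exact Or.inr ⟨v', v, hv', hv, Relation.EqvGen.symm _ _ he⟩

lemma egoal_trans {i : ℕ} {u v w : List ℕ} (h1 : EGoal i u v) (h2 : EGoal i v w) :
    EGoal i u w := by
  rcases h1 with ⟨ha, hb⟩ | ⟨p, p', hp, hp', he⟩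
  · rcases h2 with ⟨hc, hd⟩ | ⟨q, q', hq, hq', he'⟩
    · exact Or.inl ⟨ha, hd⟩
    · rw [hb] at hq; exact absurd hq (by simp)
  · rcases h2 with ⟨hc, hd⟩ | ⟨q, q', hq, hq', he'⟩
    · rw [hc] at hp'; exact absurd hp' (by simp)
    · refine Or.inr ⟨p, q', hp, hq', ?_⟩
      rw [hp'] at hq
      have : p' = q := by simpa using hq
      exact Relation.EqvGen.trans _ _ _ he (this ▸ he')

lemma fgoal_refl (i : ℕ) (w : List ℕ) : FGoal i w w := by
  rcases h : Fop i w with _ | v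
  · exact Or.inl ⟨h, h⟩
  · exact Or.inr ⟨v, v, h, h, Relation.EqvGen.refl v⟩

lemma fgoal_symm {i : ℕ} {w w' : List ℕ} (h : FGoal i w w') : FGoal i w' w := by
  rcases h with ⟨h1, h2⟩ | ⟨v, v', hv, hv', he⟩
  · exact Or.inl ⟨h2, h1⟩
  · exact Or.inr ⟨v', v, hv', hv, Relation.EqvGen.symm _ _ he⟩

lemma fgoal_trans {i : ℕ} {u v w : List ℕ} (h1 : FGoal i u v) (h2 : FGoal i v w) :
    FGoal i u w := by
  rcases h1 with ⟨ha, hb⟩ | ⟨p, p', hp, hp', he⟩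
  · rcases h2 with ⟨hc, hd⟩ | ⟨q, q', hq, hq', he'⟩
    · exact Or.inl ⟨ha, hd⟩
    · rw [hb] at hq; exact absurd hq (by simp)
  · rcases h2 with ⟨hc, hd⟩ | ⟨q, q', hq, hq', he'⟩
    · rw [hc] at hp'; exact absurd hp' (by simp)
    · refine Or.inr ⟨p, q', hp, hq', ?_⟩
      rw [hp'] at hq
      have : p' = q := by simpa using hq
      exact Relation.EqvGen.trans _ _ _ he (this ▸ he')

lemma knuthEquiv_EF (i : ℕ) {u u' : List ℕ} (h : KnuthEquiv u u') :
    EGoal i u u' ∧ FGoal i u u' := by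
  induction h with
  | rel x y hr => exact knuthStep_EF i hr
  | refl x => exact ⟨egoal_refl i x, fgoal_refl i x⟩
  | symm x y hxy ih => exact ⟨egoal_symm ih.1, fgoal_symm ih.2⟩
  | trans x y z hxy hyz ih1 ih2 =>
    exact ⟨egoal_trans ih1.1 ih2.1, fgoal_trans ih1.2 ih2.2⟩



/-- If `u, u' ∈ [m]^n` are Knuth equivalent, then `E_i(u)` and `E_i(u')`
are both `0` or Knuth equivalent, and likewise for `F_i`. -/
theorem knuthEquiv_crystal (m n i : ℕ) (hm : 1 ≤ m) (hn : 1 ≤ n)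
    (hi : 1 ≤ i) (him : i < m) (u u' : List ℕ)
    (hu : u.length = n) (hu1 : IsWordOver m u)
    (hu' : u'.length = n) (hu1' : IsWordOver m u')
    (h : KnuthEquiv u u') :
    ((Eop i u = none ∧ Eop i u' = none) ∨
      ∃ v v', Eop i u = some v ∧ Eop i u' = some v' ∧ KnuthEquiv v v') ∧
    ((Fop i u = none ∧ Fop i u' = none) ∨
      ∃ v v', Fop i u = some v ∧ Fop i u' = some v' ∧ KnuthEquiv v v') := by
  exact knuthEquiv_EF i h
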